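/- arXiv:2309.04121 — 8 statements merged into one kernel-verified Lean document; each statement's English description precedes it below -/
import Mathlib

section
/- Let q be a power of an odd prime, let β ∈ F_{q²} with β ≠ 1 and N(β) = 1, let a, b, c ∈ F_{q²} and d ∈ F_{q²} \ F_q. Then (x^{q+1} + β·x² + a·x^q + b·x + c)/(x^q + x + d) is not a permutation rational function of F_{q²}. -/
open Finset

/-- Let `q` be a power of an odd prime, `β ∈ F_{q²}` with `β ≠ 1` and
`N(β) = 1`, `a, b, c ∈ F_{q²}` and `d ∈ F_{q²} \ F_q`. Then
`(x^{q+1} + β·x² + a·x^q + b·x + c)/(x^q + x + d)` is not a permutation rational function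
of `F_{q²}`. Here `K` plays the role of `F_{q²}`, `N(x) = x^{q+1}`, and since `x^q + x + d`
has no zero in `F_{q²}`, being a permutation rational function is equivalent to the map
`x ↦ (x^{q+1} + β·x² + a·x^q + b·x + c)/(x^q + x + d)` permuting `F_{q²}`. -/
theorem stmt9 (p n q : ℕ) (hp : p.Prime) (hp2 : p ≠ 2) (hn : 0 < n)
    (hq : q = p ^ n)
    (K : Type) [Field K] [Fintype K] (hK : Fintype.card K = q ^ 2)
    (β : K) (hβ1 : β ≠ 1) (hβN : β ^ (q + 1) = 1)
    (a b c d : K) (hd : d ^ q ≠ d) :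
    ¬ Function.Bijective (fun x : K =>
        (x ^ (q + 1) + β * x ^ 2 + a * x ^ q + b * x + c) / (x ^ q + x + d)) := by
  haveI : Fact p.Prime := ⟨hp⟩
  -- characteristic p
  have hpK : (p : K) = 0 := by
    have h0 : ((Fintype.card K : ℕ) : K) = 0 := FiniteField.cast_card_eq_zero K
    rw [hK, hq] at h0
    push_cast at h0
    rw [← pow_mul] at h0
    exact pow_eq_zero_iff (by positivity) |>.mp h0
  haveI : CharP K p := (CharP.charP_iff_prime_eq_zero hp).mpr hpK
  -- Frobenius-type facts
  have hfadd : ∀ s t : K, (s + t) ^ q = s ^ q + t ^ q := by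
    intro s t; rw [hq]; exact add_pow_char_pow s t p n
  have hfsub : ∀ s t : K, (s - t) ^ q = s ^ q - t ^ q := by
    intro s t; rw [hq]; exact sub_pow_char_pow s t n
  have hqq : ∀ t : K, (t ^ q) ^ q = t := by
    intro t
    rw [← pow_mul, show q * q = Fintype.card K by rw [hK]; ring, FiniteField.pow_card]
  have h2 : (2 : K) ≠ 0 := by
    intro h
    have hdvd : p ∣ 2 := (CharP.cast_eq_zero_iff K p 2).mp (by exact_mod_cast h)
    exact hp2 ((Nat.prime_dvd_prime_iff_eq hp Nat.prime_two).mp hdvd)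
  have h2q : (2 : K) ^ q = 2 := by
    have h11 := hfadd 1 1
    norm_num at h11
    exact h11
  -- existence of w ≠ 0 with w^q = -w
  obtain ⟨w, hw0, hwq⟩ : ∃ w : K, w ≠ 0 ∧ w ^ q = -w := by
    by_contra hcon; push_neg at hcon
    have hinj : Function.Injective (fun t : K => t ^ q + t) := by
      intro u v huv
      by_contra hne
      simp only at huv
      refine hcon (u - v) (sub_ne_zero.mpr hne) ?_
      rw [hfsub]; linear_combination huv
    obtain ⟨x, hx⟩ := Finite.injective_iff_surjective.mp hinj d
    simp only at hx
    apply hd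
    calc d ^ q = (x ^ q + x) ^ q := by rw [hx]
    _ = x + x ^ q := by rw [hfadd, hqq]
    _ = d := by rw [← hx]; ring
  -- facts about β
  have hβ0 : β ≠ 0 := by
    intro h; rw [h, zero_pow (Nat.succ_ne_zero q)] at hβN; exact zero_ne_one hβN
  have hβq : β ^ q * β = 1 := by rw [← pow_succ]; exact hβN
  have hβm1 : β - 1 ≠ 0 := sub_ne_zero.mpr hβ1
  have hβqm1 : β ^ q - 1 ≠ 0 := by
    intro h
    have h1 : β ^ q = 1 := by linear_combination h
    rw [h1, one_mul] at hβq
    exact hβ1 hβq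
  set θ : K := (β - 1)⁻¹ with hθ
  have hθq : θ ^ q = (β ^ q - 1)⁻¹ := by
    rw [hθ, inv_pow, hfsub, one_pow]
  have htrθ : θ ^ q + θ = -1 := by
    rw [hθq, hθ]
    field_simp
    linear_combination hβq
  set r : K := ((a - b) * θ) ^ q + (a - b) * θ with hr
  have hrq : r ^ q = r := by rw [hr, hfadd, hqq]; ring
  have hr' : (a - b) ^ q * θ ^ q + (a - b) * θ = r := by rw [hr, mul_pow]
  set σ : K := (a - b - r) * θ with hσ
  have hσq : σ ^ q + σ = 2 * r := by
    have e1 : σ ^ q = (a - b) ^ q * θ ^ q - r * θ ^ q := by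
      rw [hσ, mul_pow, hfsub, hrq]; ring
    rw [e1, hσ]
    linear_combination hr' - r * htrθ
  set z : K := σ / 2 with hz
  have hzq : z ^ q = r - z := by
    rw [hz, div_pow, h2q]
    field_simp
    linear_combination hσq
  set x : K := z + w with hx
  set y : K := z - w with hy
  have hxq : x ^ q = r - x := by rw [hx, hfadd, hzq, hwq]; ring
  have hyq : y ^ q = r - y := by rw [hy, hfsub, hzq, hwq]; ring
  have hxy : x ≠ y := by
    rw [hx, hy]
    intro h
    have h2w : (2 : K) * w = 0 := by linear_combination h
    rcases mul_eq_zero.mp h2w with h' | h'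
    · exact h2 h'
    · exact hw0 h'
  have hxysum : x + y = σ := by
    rw [hx, hy, hz]; field_simp; ring
  have hσβ : (β - 1) * σ = a - b - r := by
    rw [hσ, hθ]; field_simp
  intro hbij
  apply hxy
  apply hbij.injective
  show (x ^ (q + 1) + β * x ^ 2 + a * x ^ q + b * x + c) / (x ^ q + x + d)
      = (y ^ (q + 1) + β * y ^ 2 + a * y ^ q + b * y + c) / (y ^ q + y + d)
  rw [pow_succ x q, pow_succ y q, hxq, hyq]
  rw [show r - x + x + d = r + d from by ring, show r - y + y + d = r + d from by ring]
  have hnum : (r - x) * x + β * x ^ 2 + a * (r - x) + b * x + c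
      = (r - y) * y + β * y ^ 2 + a * (r - y) + b * y + c := by
    linear_combination ((β - 1) * (x - y)) * hxysum + (x - y) * hσβ
  rw [hnum]
end

section
/- Let a, b, c ∈ F_{q²} with a − b ∉ F_q. Then the number of zeros of x^{q+1} + x² + a·x^q + b·x + c in F_{q²} equals the number of zeros in F_q of the cubic x³ + Tr(b)·x² + (Tr(c) − N(a) + N(b))·x + Tr((b − a)^q·(a² − ab + c)) + Tr(a)·N(b − a). -/
open Finset
open scoped Classical

/-- Let `q` be any prime power and `a, b, c ∈ F_{q²}` with `a − b ∉ F_q`.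
Then the number of zeros of `x^{q+1} + x² + a·x^q + b·x + c` in `F_{q²}` equals the number
of zeros in `F_q` of
`x³ + Tr(b)·x² + (Tr(c) − N(a) + N(b))·x + Tr((b−a)^q·(a²−ab+c)) + Tr(a)·N(b−a)`.
Here `K` plays the role of `F_{q²}`, `F_q = {x : K | x^q = x}`, `Tr(x) = x^q + x` and
`N(x) = x^{q+1}`. -/
theorem stmt10 (p n q : ℕ) (hp : p.Prime) (hn : 0 < n) (hq : q = p ^ n)
    (K : Type) [Field K] [Fintype K] (hK : Fintype.card K = q ^ 2)
    (a b c : K) (hab : (a - b) ^ q ≠ a - b) :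
    (Finset.univ.filter
        (fun x : K => x ^ (q + 1) + x ^ 2 + a * x ^ q + b * x + c = 0)).card =
      (Finset.univ.filter
        (fun x : K => x ^ q = x ∧
          x ^ 3 + (b ^ q + b) * x ^ 2 +
            ((c ^ q + c) - a ^ (q + 1) + b ^ (q + 1)) * x +
            (((b - a) ^ q * (a ^ 2 - a * b + c)) ^ q +
              (b - a) ^ q * (a ^ 2 - a * b + c)) +
            (a ^ q + a) * (b - a) ^ (q + 1) = 0)).card := by
  -- characteristic
  have hq0 : 0 < q := by rw [hq]; exact pow_pos hp.pos n
  have hfact : Fact p.Prime := ⟨hp⟩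
  have hcharP : CharP K p := by
    set r := ringChar K with hr
    have hcr : CharP K r := ringChar.charP K
    have hrp : r.Prime := CharP.char_is_prime K r
    obtain ⟨m, _, hcard⟩ := FiniteField.card K r
    have hdvd : p ∣ r ^ (m : ℕ) := by
      rw [← hcard, hK, hq, ← pow_mul]
      exact dvd_pow_self p (by positivity)
    have : p = r := ((Nat.prime_dvd_prime_iff_eq hp hrp).mp (hp.dvd_of_dvd_pow hdvd))
    rwa [this]
  -- Frobenius facts
  have hadd : ∀ x y : K, (x + y) ^ q = x ^ q + y ^ q := by
    intro x y; rw [hq]; exact add_pow_char_pow x y p n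
  have hsub : ∀ x y : K, (x - y) ^ q = x ^ q - y ^ q := by
    intro x y; rw [hq]; exact sub_pow_char_pow x y n
  have hneg : ∀ x : K, (-x) ^ q = -(x ^ q) := by
    intro x
    have h := hsub 0 x
    simp only [zero_pow hq0.ne', zero_sub] at h; exact h
  have hqq : ∀ x : K, (x ^ q) ^ q = x := by
    intro x
    rw [← pow_mul]
    have : q * q = Fintype.card K := by rw [hK, sq]
    rw [this]
    exact FiniteField.pow_card x
  -- nonvanishing of denominators
  have hd : ∀ s : K, s ^ q = s → s + b - a ≠ 0 := by
    intro s hs h0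
    apply hab
    have hsab : a - b = s := by linear_combination -h0
    rw [hsab, hs]
  have hd' : ∀ s : K, s ^ q = s → s + b ^ q - a ^ q ≠ 0 := by
    intro s hs h0
    have : (s + b - a) ^ q = 0 := by
      rw [hsub, hadd, hs, h0]
    exact hd s hs ((pow_eq_zero_iff hq0.ne').mp this)
  -- rewrite of the cubic as E(s) := s*d*d' + (a*s+c)*d' + (a^q*s+c^q)*d
  have hcubic : ∀ s : K, s ^ q = s →
      s ^ 3 + (b ^ q + b) * s ^ 2 +
        ((c ^ q + c) - a ^ (q + 1) + b ^ (q + 1)) * s +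
        (((b - a) ^ q * (a ^ 2 - a * b + c)) ^ q +
          (b - a) ^ q * (a ^ 2 - a * b + c)) +
        (a ^ q + a) * (b - a) ^ (q + 1)
      = s * (s + b - a) * (s + b ^ q - a ^ q) + (a * s + c) * (s + b ^ q - a ^ q)
          + (a ^ q * s + c ^ q) * (s + b - a) := by
    intro s hs
    have h1 : ((b - a) ^ q * (a ^ 2 - a * b + c)) ^ q
        = (b - a) * ((a ^ q) ^ 2 - a ^ q * b ^ q + c ^ q) := by
      rw [mul_pow, hqq]
      congr 1
      rw [hadd, hsub, mul_pow]
      congr 2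
      rw [← pow_mul, ← pow_mul, Nat.mul_comm]
    have e3 : (b - a) ^ (q + 1) = (b ^ q - a ^ q) * (b - a) := by rw [pow_succ, hsub]
    rw [h1, e3, hsub, pow_succ, pow_succ]
    ring
  -- the maps
  have key : ∀ x : K, x ^ (q + 1) + x ^ 2 + a * x ^ q + b * x + c = 0 →
      x * ((x ^ q + x) + b - a) = -(a * (x ^ q + x) + c) := by
    intro x hx
    rw [pow_succ] at hx
    linear_combination hx
  refine Finset.card_bij' (fun x _ => x ^ q + x)
    (fun s _ => -(a * s + c) / (s + b - a)) ?_ ?_ ?_ ?_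
  · -- forward map lands in target
    intro x hx
    simp only [Finset.mem_filter, Finset.mem_univ, true_and] at hx ⊢
    set s := x ^ q + x with hsdef
    have hs : s ^ q = s := by rw [hsdef, hadd, hqq]; ring
    refine ⟨hs, ?_⟩
    rw [hcubic s hs]
    have hx1 : x * (s + b - a) = -(a * s + c) := key x hx
    have hx2 : x ^ q * (s + b ^ q - a ^ q) = -(a ^ q * s + c ^ q) := by
      have := congrArg (fun t : K => t ^ q) hx1
      rw [mul_pow, hsub, hadd, hs, hneg, hadd, mul_pow, hs] at this
      exact this
    have hsx : s = x + x ^ q := by rw [hsdef]; ring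
    calc s * (s + b - a) * (s + b ^ q - a ^ q) + (a * s + c) * (s + b ^ q - a ^ q)
          + (a ^ q * s + c ^ q) * (s + b - a)
        = (x * (s + b - a) + (a * s + c)) * (s + b ^ q - a ^ q)
          + (x ^ q * (s + b ^ q - a ^ q) + (a ^ q * s + c ^ q)) * (s + b - a) := by
          rw [hsx]; ring
      _ = 0 := by rw [hx1, hx2]; ring
  · -- backward map lands in source
    intro s hs
    simp only [Finset.mem_filter, Finset.mem_univ, true_and] at hs ⊢
    obtain ⟨hsq, hcub⟩ := hs
    rw [hcubic s hsq] at hcub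
    have hdn := hd s hsq
    have hdn' := hd' s hsq
    set x : K := -(a * s + c) / (s + b - a) with hxdef
    have hx1 : x * (s + b - a) = -(a * s + c) := by
      rw [hxdef]; field_simp
    have hxq : x ^ q = -(a ^ q * s + c ^ q) / (s + b ^ q - a ^ q) := by
      rw [hxdef, div_pow, hneg, hadd, mul_pow, hsq, hsub, hadd, hsq]
    have hx2 : x ^ q * (s + b ^ q - a ^ q) = -(a ^ q * s + c ^ q) := by
      rw [hxq]; field_simp
    have htr : x ^ q + x = s := by
      have h := hcub
      have expand : (x ^ q + x - s) * ((s + b - a) * (s + b ^ q - a ^ q)) = 0 := by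
        calc (x ^ q + x - s) * ((s + b - a) * (s + b ^ q - a ^ q))
            = (x * (s + b - a) + (a * s + c)) * (s + b ^ q - a ^ q)
              + (x ^ q * (s + b ^ q - a ^ q) + (a ^ q * s + c ^ q)) * (s + b - a)
              - (s * (s + b - a) * (s + b ^ q - a ^ q) + (a * s + c) * (s + b ^ q - a ^ q)
                + (a ^ q * s + c ^ q) * (s + b - a)) := by ring
          _ = 0 := by rw [hx1, hx2, h]; ring
      have := mul_eq_zero.mp expand
      rcases this with h0 | h0
      · linear_combination h0
      · exact absurd h0 (mul_ne_zero hdn hdn')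
    -- f(x) = 0
    rw [pow_succ]
    calc x ^ q * x + x ^ 2 + a * x ^ q + b * x + c
        = (x + a) * (x ^ q + x) + (b - a) * x + c := by ring
      _ = (x + a) * s + (b - a) * x + c := by rw [htr]
      _ = x * (s + b - a) + (a * s + c) := by ring
      _ = 0 := by rw [hx1]; ring
  · -- left inverse
    intro x hx
    simp only [Finset.mem_filter, Finset.mem_univ, true_and] at hx
    set s := x ^ q + x with hsdef
    have hs : s ^ q = s := by rw [hsdef, hadd, hqq]; ring
    have hx1 : x * (s + b - a) = -(a * s + c) := key x hx
    field_simp [hd s hs]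
    linear_combination -hx1
  · -- right inverse
    intro s hs
    simp only [Finset.mem_filter, Finset.mem_univ, true_and] at hs
    obtain ⟨hsq, hcub⟩ := hs
    rw [hcubic s hsq] at hcub
    have hdn := hd s hsq
    have hdn' := hd' s hsq
    set x : K := -(a * s + c) / (s + b - a) with hxdef
    have hx1 : x * (s + b - a) = -(a * s + c) := by
      rw [hxdef]; field_simp
    have hxq : x ^ q = -(a ^ q * s + c ^ q) / (s + b ^ q - a ^ q) := by
      rw [hxdef, div_pow, hneg, hadd, mul_pow, hsq, hsub, hadd, hsq]
    have hx2 : x ^ q * (s + b ^ q - a ^ q) = -(a ^ q * s + c ^ q) := by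
      rw [hxq]; field_simp
    have expand : (x ^ q + x - s) * ((s + b - a) * (s + b ^ q - a ^ q)) = 0 := by
      calc (x ^ q + x - s) * ((s + b - a) * (s + b ^ q - a ^ q))
          = (x * (s + b - a) + (a * s + c)) * (s + b ^ q - a ^ q)
            + (x ^ q * (s + b ^ q - a ^ q) + (a ^ q * s + c ^ q)) * (s + b - a)
            - (s * (s + b - a) * (s + b ^ q - a ^ q) + (a * s + c) * (s + b ^ q - a ^ q)
              + (a ^ q * s + c ^ q) * (s + b - a)) := by ring
        _ = 0 := by rw [hx1, hx2, hcub]; ring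
    rcases mul_eq_zero.mp expand with h0 | h0
    · linear_combination h0
    · exact absurd h0 (mul_ne_zero hdn hdn')
end

section
/- Let a, b, c ∈ F_{q²} with a − b ∈ F_q and Tr(a² − ab + c) ≠ 0. Then the number of zeros of x^{q+1} + x² + a·x^q + b·x + c in F_{q²} equals the number of zeros in F_q of the quadratic x² + (a^q + b)·x + Tr(c). -/
open Finset
open scoped Classical

/-- Let `q` be any prime power and `a, b, c ∈ F_{q²}` with `a − b ∈ F_q` and
`Tr(a² − ab + c) ≠ 0`. Then the number of zeros of `x^{q+1} + x² + a·x^q + b·x + c` in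
`F_{q²}` equals the number of zeros in `F_q` of `x² + (a^q + b)·x + Tr(c)`.
Here `K` plays the role of `F_{q²}`, `F_q = {x : K | x^q = x}` and `Tr(x) = x^q + x`. -/
theorem stmt11 (p n q : ℕ) (hp : p.Prime) (hn : 0 < n) (hq : q = p ^ n)
    (K : Type) [Field K] [Fintype K] (hK : Fintype.card K = q ^ 2)
    (a b c : K) (hab : (a - b) ^ q = a - b)
    (hγ : (a ^ 2 - a * b + c) ^ q + (a ^ 2 - a * b + c) ≠ 0) :
    (Finset.univ.filter
        (fun x : K => x ^ (q + 1) + x ^ 2 + a * x ^ q + b * x + c = 0)).card =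
      (Finset.univ.filter
        (fun x : K => x ^ q = x ∧
          x ^ 2 + (a ^ q + b) * x + (c ^ q + c) = 0)).card := by
  haveI : Fact p.Prime := ⟨hp⟩
  have hq0 : q ≠ 0 := by rw [hq]; exact pow_ne_zero n hp.ne_zero
  -- characteristic of K is p
  haveI hchar : CharP K p := by
    obtain ⟨r, hr⟩ := CharP.exists K
    haveI := hr
    have hrprime : r.Prime := CharP.char_is_prime K r
    haveI : Fact r.Prime := ⟨hrprime⟩
    obtain ⟨m, hm⟩ := FiniteField.card K r
    have hpow : p ^ (2 * n) = r ^ (m : ℕ) := by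
      rw [← hm.2, hK, hq, ← pow_mul, Nat.mul_comm]
    have hdvd : p ∣ r ^ (m : ℕ) := by
      rw [← hpow]
      exact dvd_pow_self p (by positivity)
    have hpr : p = r := (Nat.prime_dvd_prime_iff_eq hp hrprime).mp
      (hp.dvd_of_dvd_pow hdvd)
    rwa [hpr]
  -- the Frobenius x ↦ x^q is additive
  have hadd : ∀ x y : K, (x + y) ^ q = x ^ q + y ^ q := fun x y => by
    rw [hq]; exact add_pow_char_pow x y p n
  have hsub : ∀ x y : K, (x - y) ^ q = x ^ q - y ^ q := fun x y => by
    have h := hadd (x - y) y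
    rw [sub_add_cancel] at h
    linear_combination -h
  have hqq : ∀ x : K, (x ^ q) ^ q = x := fun x => by
    rw [← pow_mul, ← pow_two]
    have := FiniteField.pow_card x
    rwa [hK] at this
  -- from hab : b^q in terms of a^q
  have hb : b ^ q = a ^ q - a + b := by
    have h := hab
    rw [hsub] at h
    linear_combination -h
  -- key identity : f(x) + f(x)^q = g(Tr x)
  have key : ∀ x : K,
      (x ^ q + x) ^ 2 + (a ^ q + b) * (x ^ q + x) + (c ^ q + c)
        = (x ^ (q + 1) + x ^ 2 + a * x ^ q + b * x + c)
          + (x ^ (q + 1) + x ^ 2 + a * x ^ q + b * x + c) ^ q := by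
    intro x
    have e1 : (x ^ (q + 1) + x ^ 2 + a * x ^ q + b * x + c) ^ q
        = x * x ^ q + (x ^ q) ^ 2 + a ^ q * x + b ^ q * x ^ q + c ^ q := by
      rw [hadd, hadd, hadd, hadd, pow_succ, mul_pow, mul_pow, mul_pow, hqq,
        pow_right_comm]
    rw [e1, pow_succ]
    linear_combination (-(x ^ q)) * hb
  -- the quadratic does not vanish at a - b
  have hγ' : (a - b) * (a ^ q + a) + (c ^ q + c) ≠ 0 := by
    intro h
    apply hγ
    have e2 : (a ^ 2 - a * b + c) ^ q
        = (a ^ q) ^ 2 - a ^ q * b ^ q + c ^ q := by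
      rw [hadd, hsub, mul_pow, pow_right_comm]
    rw [e2, hb]
    linear_combination h
  have hroot_ne : ∀ y : K,
      y ^ 2 + (a ^ q + b) * y + (c ^ q + c) = 0 → a - b - y ≠ 0 := by
    intro y hy hcon
    apply hγ'
    have hy' : y = a - b := by linear_combination -hcon
    rw [hy'] at hy
    linear_combination hy
  refine Finset.card_bij' (fun x _ => x ^ q + x)
    (fun y _ => (a * y + c) / (a - b - y)) ?_ ?_ ?_ ?_
  · -- forward map
    intro x hx
    rw [Finset.mem_filter] at hx ⊢
    obtain ⟨-, hfx⟩ := hx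
    refine ⟨Finset.mem_univ _, ?_, ?_⟩
    · rw [hadd, hqq, add_comm]
    · rw [key x, hfx, zero_pow hq0, add_zero]
  · -- backward map
    intro y hy
    rw [Finset.mem_filter] at hy ⊢
    obtain ⟨-, hyq, hgy⟩ := hy
    refine ⟨Finset.mem_univ _, ?_⟩
    have hne : a - b - y ≠ 0 := hroot_ne y hgy
    set x : K := (a * y + c) / (a - b - y) with hxdef
    have hxq : x ^ q = (a ^ q * y + c ^ q) / (a - b - y) := by
      rw [hxdef, div_pow, hadd, mul_pow, hyq, hsub, hab, hyq]
    have htr : x ^ q + x = y := by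
      rw [hxq, hxdef, ← add_div, div_eq_iff hne]
      linear_combination hgy
    have hxe : x * (a - b - y) = a * y + c := by
      rw [hxdef, div_mul_cancel₀ _ hne]
    have hxq2 : x ^ q = y - x := by linear_combination htr
    rw [pow_succ, hxq2]
    linear_combination -hxe
  · -- left inverse
    intro x hx
    rw [Finset.mem_filter] at hx
    obtain ⟨-, hfx⟩ := hx
    set y : K := x ^ q + x with hydef
    have hgy : y ^ 2 + (a ^ q + b) * y + (c ^ q + c) = 0 := by
      rw [hydef, key x, hfx, zero_pow hq0, add_zero]
    have hne : a - b - y ≠ 0 := hroot_ne y hgy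
    rw [eq_comm, eq_div_iff hne]
    have hfx' : x * (x ^ q + x) + a * (x ^ q + x) + (b - a) * x + c = 0 := by
      rw [pow_succ] at hfx
      linear_combination hfx
    rw [← hydef] at hfx'
    linear_combination -hfx'
  · -- right inverse
    intro y hy
    rw [Finset.mem_filter] at hy
    obtain ⟨-, hyq, hgy⟩ := hy
    have hne : a - b - y ≠ 0 := hroot_ne y hgy
    have hxq : ((a * y + c) / (a - b - y)) ^ q
        = (a ^ q * y + c ^ q) / (a - b - y) := by
      rw [div_pow, hadd, mul_pow, hyq, hsub, hab, hyq]
    rw [hxq, ← add_div, div_eq_iff hne]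
    linear_combination hgy
end

section
/- Let a, b, c ∈ F_{q²} with a − b ∈ F_q and Tr(a² − ab + c) = 0. Then the number of zeros of x^{q+1} + x² + a·x^q + b·x + c in F_{q²} is: 1 if a² − ab + c ≠ 0 and a^q + 2a − b ≠ 0; 0 if a² − ab + c ≠ 0 and a^q + 2a − b = 0; q + 1 if a² − ab + c = 0 and a^q + 2a − b ≠ 0; and q if a² − ab + c = 0 and a^q + 2a − b = 0. -/
open Finset
open scoped Classical

lemma stmt12_root_bound (q : ℕ) (hq1 : 1 < q) (K : Type) [Field K] [Fintype K]
    (v u : K) :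
    (Finset.univ.filter fun y : K => y ^ q + (v * y + u) = 0).card ≤ q := by
  classical
  set P : Polynomial K := Polynomial.X ^ q + (Polynomial.C v * Polynomial.X + Polynomial.C u)
    with hP
  have hlow : (Polynomial.C v * Polynomial.X + Polynomial.C u).natDegree <
      ((Polynomial.X : Polynomial K) ^ q).natDegree := by
    rw [Polynomial.natDegree_X_pow]
    exact lt_of_le_of_lt Polynomial.natDegree_linear_le hq1
  have hdeg : P.natDegree = q := by
    rw [hP, Polynomial.natDegree_add_eq_left_of_natDegree_lt hlow, Polynomial.natDegree_X_pow]
  have hP0 : P ≠ 0 := by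
    intro h
    rw [h, Polynomial.natDegree_zero] at hdeg
    omega
  have hsub : (Finset.univ.filter fun y : K => y ^ q + (v * y + u) = 0) ⊆ P.roots.toFinset := by
    intro y hy
    simp only [Finset.mem_filter] at hy
    rw [Multiset.mem_toFinset, Polynomial.mem_roots hP0]
    simpa [Polynomial.IsRoot, hP] using hy.2
  calc (Finset.univ.filter fun y : K => y ^ q + (v * y + u) = 0).card
      ≤ P.roots.toFinset.card := Finset.card_le_card hsub
    _ ≤ Multiset.card P.roots := Multiset.toFinset_card_le _
    _ ≤ P.natDegree := P.card_roots'
    _ = q := hdeg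

/-- Let `q` be any prime power and `a, b, c ∈ F_{q²}` with `a − b ∈ F_q` and
`Tr(a² − ab + c) = 0`. Then the number of zeros of `x^{q+1} + x² + a·x^q + b·x + c` in
`F_{q²}` is: `1` if `a² − ab + c ≠ 0` and `a^q + 2a − b ≠ 0`; `0` if `a² − ab + c ≠ 0` and
`a^q + 2a − b = 0`; `q + 1` if `a² − ab + c = 0` and `a^q + 2a − b ≠ 0`; and `q` if
`a² − ab + c = 0` and `a^q + 2a − b = 0`.
Here `K` plays the role of `F_{q²}`, `F_q = {x : K | x^q = x}` and `Tr(x) = x^q + x`. -/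
theorem stmt12 (p n q : ℕ) (hp : p.Prime) (hn : 0 < n) (hq : q = p ^ n)
    (K : Type) [Field K] [Fintype K] (hK : Fintype.card K = q ^ 2)
    (a b c : K) (hab : (a - b) ^ q = a - b)
    (hγtr : (a ^ 2 - a * b + c) ^ q + (a ^ 2 - a * b + c) = 0)
    (Z : ℕ)
    (hZ : Z = (Finset.univ.filter
      (fun x : K => x ^ (q + 1) + x ^ 2 + a * x ^ q + b * x + c = 0)).card) :
    (a ^ 2 - a * b + c ≠ 0 → a ^ q + 2 * a - b ≠ 0 → Z = 1) ∧
    (a ^ 2 - a * b + c ≠ 0 → a ^ q + 2 * a - b = 0 → Z = 0) ∧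
    (a ^ 2 - a * b + c = 0 → a ^ q + 2 * a - b ≠ 0 → Z = q + 1) ∧
    (a ^ 2 - a * b + c = 0 → a ^ q + 2 * a - b = 0 → Z = q) := by
  classical
  haveI : Fact p.Prime := ⟨hp⟩
  have hq1 : 1 < q := by
    rw [hq]; exact Nat.one_lt_pow hn.ne' hp.one_lt
  have hq0 : q ≠ 0 := by omega
  have hpK : (p : K) = 0 := by
    have h := FiniteField.cast_card_eq_zero K
    rw [hK, hq, ← pow_mul] at h
    push_cast at h
    exact pow_eq_zero_iff (by positivity : 0 < n * 2).ne' |>.mp h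
  haveI hKp : CharP K p := (CharP.charP_iff_prime_eq_zero hp).mpr hpK
  haveI : ExpChar K p := .prime hp
  set φ : K →+* K := iterateFrobenius K p n with hφdef
  have hφ : ∀ x : K, φ x = x ^ q := fun x => by
    rw [hφdef, iterateFrobenius_def, hq]
  have hqq : ∀ x : K, (x ^ q) ^ q = x := by
    intro x
    rw [← pow_mul]
    have hc : q * q = Fintype.card K := by rw [hK, sq]
    rw [hc]
    exact FiniteField.pow_card x
  have hfr_add : ∀ x y : K, (x + y) ^ q = x ^ q + y ^ q := fun x y => by
    rw [← hφ, ← hφ, ← hφ, map_add]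
  have hfr_sub : ∀ x y : K, (x - y) ^ q = x ^ q - y ^ q := fun x y => by
    rw [← hφ, ← hφ, ← hφ, map_sub]
  set γ : K := a ^ 2 - a * b + c with hγdef
  set e : K := a ^ q + 2 * a - b with hedef
  have hγq : γ ^ q = -γ := by linear_combination hγtr
  have he : e ^ q = e := by
    have h2 : e ^ q = a + (2 : K) ^ q * a ^ q - b ^ q := by
      rw [hedef, hfr_sub, hfr_add, hqq, mul_pow]
    have h2' : ((2 : K)) ^ q = 2 := by
      rw [← hφ]; exact map_ofNat φ 2
    have hab' : a ^ q - b ^ q = a - b := by rw [← hfr_sub, hab]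
    rw [h2, h2', hedef]
    linear_combination hab'
  have hT_fix : ∀ x : K, (x ^ q + x) ^ q = x ^ q + x := by
    intro x; rw [hfr_add, hqq]; ring
  have key : ∀ x : K, x ^ (q + 1) + x ^ 2 + a * x ^ q + b * x + c
      = (x + a) * (((x + a) ^ q + (x + a)) - e) + γ := by
    intro x
    rw [hfr_add x a, pow_succ, hedef, hγdef]
    ring
  -- Z in terms of the shifted polynomial
  have hZg : Z = (univ.filter fun y : K => y * ((y ^ q + y) - e) + γ = 0).card := by
    rw [hZ]
    have h1 : (univ.filter fun x : K => x ^ (q + 1) + x ^ 2 + a * x ^ q + b * x + c = 0)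
        = (univ.filter fun x : K => (x + a) * (((x + a) ^ q + (x + a)) - e) + γ = 0) := by
      apply Finset.filter_congr; intro x _; rw [key x]
    rw [h1]
    apply Finset.card_nbij' (fun x => x + a) (fun y => y - a)
    · intro x hx
      simp only [mem_coe, mem_filter, mem_univ, true_and] at hx ⊢
      exact hx
    · intro y hy
      simp only [mem_coe, mem_filter, mem_univ, true_and] at hy ⊢
      simpa [sub_add_cancel] using hy
    · intro x _; simp
    · intro y _; simp
  -- counting fibers of the trace map
  set ker := univ.filter (fun y : K => y ^ q + y = 0) with hkerdef
  set Fq := univ.filter (fun t : K => t ^ q = t) with hFqdef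
  have hker_le : ker.card ≤ q := by
    have hb := stmt12_root_bound q hq1 K 1 0
    have hpred : (univ.filter fun y : K => y ^ q + (1 * y + 0) = 0) = ker := by
      apply Finset.filter_congr; intro y _; rw [one_mul, add_zero]
    rw [hpred] at hb; exact hb
  have hFq_le : Fq.card ≤ q := by
    have hb := stmt12_root_bound q hq1 K (-1) 0
    have hpred : (univ.filter fun y : K => y ^ q + (-1 * y + 0) = 0) = Fq := by
      apply Finset.filter_congr; intro y _
      rw [neg_one_mul, add_zero, add_neg_eq_zero]
    rw [hpred] at hb; exact hb
  have hfiber : ∀ t : K, (∃ y0 : K, y0 ^ q + y0 = t) →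
      (univ.filter fun y : K => y ^ q + y = t).card = ker.card := by
    rintro t ⟨y0, hy0⟩
    rw [hkerdef]
    apply Finset.card_nbij' (fun y => y - y0) (fun y => y + y0)
    · intro y hy
      simp only [mem_coe, mem_filter, mem_univ, true_and] at hy ⊢
      rw [hfr_sub]
      linear_combination hy - hy0
    · intro y hy
      simp only [mem_coe, mem_filter, mem_univ, true_and] at hy ⊢
      rw [hfr_add]
      linear_combination hy + hy0
    · intro x _; simp
    · intro y _; simp
  have hpart : q * q = (univ.image (fun y : K => y ^ q + y)).card * ker.card := by
    have h0 : (univ : Finset K).card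
        = ∑ t ∈ univ.image (fun y : K => y ^ q + y),
            (univ.filter fun y : K => y ^ q + y = t).card :=
      Finset.card_eq_sum_card_fiberwise (fun x _ => Finset.mem_image_of_mem _ (mem_univ x))
    have h1 : (univ : Finset K).card = q * q := by rw [Finset.card_univ, hK, sq]
    rw [← h1, h0]
    rw [Finset.sum_congr rfl (fun t ht => by
      obtain ⟨y, _, hy⟩ := Finset.mem_image.mp ht
      exact hfiber t ⟨y, hy⟩)]
    rw [Finset.sum_const, smul_eq_mul]
  have himg_le : (univ.image (fun y : K => y ^ q + y)).card ≤ Fq.card := by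
    apply Finset.card_le_card
    intro t ht
    rw [hFqdef, mem_filter]
    obtain ⟨y, _, rfl⟩ := Finset.mem_image.mp ht
    exact ⟨mem_univ _, hT_fix y⟩
  have himg_le' : (univ.image (fun y : K => y ^ q + y)).card ≤ q := himg_le.trans hFq_le
  have hkq : ker.card = q := by
    by_contra hne
    have hk : ker.card < q := lt_of_le_of_ne hker_le hne
    have h2 : (univ.image (fun y : K => y ^ q + y)).card * ker.card ≤ q * ker.card :=
      Nat.mul_le_mul_right _ himg_le'
    have h4 : q * (ker.card + 1) ≤ q * q := Nat.mul_le_mul_left q (by omega)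
    have h5 : q * (ker.card + 1) = q * ker.card + q := by ring
    omega
  have himgq : (univ.image (fun y : K => y ^ q + y)).card = q := by
    rw [hkq] at hpart
    exact (Nat.eq_of_mul_eq_mul_right (by omega) hpart.symm)
  have hFq_eq : univ.image (fun y : K => y ^ q + y) = Fq := by
    apply Finset.eq_of_subset_of_card_le
    · intro t ht
      rw [hFqdef, mem_filter]
      obtain ⟨y, _, rfl⟩ := Finset.mem_image.mp ht
      exact ⟨mem_univ _, hT_fix y⟩
    · rw [himgq]; exact hFq_le
  have hfibq : ∀ t : K, t ^ q = t → (univ.filter fun y : K => y ^ q + y = t).card = q := by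
    intro t ht
    have htm : t ∈ Fq := mem_filter.mpr ⟨mem_univ t, ht⟩
    rw [← hFq_eq] at htm
    obtain ⟨y, _, hy⟩ := Finset.mem_image.mp htm
    rw [hfiber t ⟨y, hy⟩, hkq]
  -- solution structure when γ ≠ 0
  have hsol : γ ≠ 0 → ∀ y : K,
      (y * ((y ^ q + y) - e) + γ = 0) ↔ (y ^ q + y = 0 ∧ e * y = γ) := by
    intro hγ0 y
    constructor
    · intro h
      set s : K := (y ^ q + y) - e with hs
      have hs_fix : s ^ q = s := by rw [hs, hfr_sub, hT_fix, he]
      have h1 : y * s = -γ := by rw [hs]; linear_combination h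
      have h2 : y ^ q * s = γ := by
        have h1q := congrArg (· ^ q) h1
        change (y * s) ^ q = (-γ) ^ q at h1q
        rw [mul_pow, hs_fix] at h1q
        have hneg : (-γ) ^ q = γ := by
          rw [← hφ, map_neg, hφ, hγq]; ring
        rw [hneg] at h1q; exact h1q
      have hsne : s ≠ 0 := by
        intro h0
        rw [h0, mul_zero] at h1
        exact hγ0 (by linear_combination h1)
      have hTy : y ^ q + y = 0 := by
        have h3 : (y ^ q + y) * s = 0 := by linear_combination h2 + h1
        rcases mul_eq_zero.mp h3 with h' | h'
        · exact h'
        · exact absurd h' hsne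
      refine ⟨hTy, ?_⟩
      rw [hTy] at hs
      rw [hs] at h1
      linear_combination -h1
    · rintro ⟨h1, h2⟩
      rw [h1]
      linear_combination -h2
  refine ⟨?_, ?_, ?_, ?_⟩
  · -- γ ≠ 0, e ≠ 0 : Z = 1
    intro hγ0 he0
    rw [hZg]
    have hset : (univ.filter fun y : K => y * ((y ^ q + y) - e) + γ = 0) = {e⁻¹ * γ} := by
      ext y
      simp only [mem_filter, mem_univ, true_and, mem_singleton]
      rw [hsol hγ0 y]
      constructor
      · rintro ⟨h1, h2⟩
        rw [← h2, inv_mul_cancel_left₀ he0]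
      · rintro rfl
        refine ⟨?_, mul_inv_cancel_left₀ he0 γ⟩
        have hinv : (e⁻¹ : K) ^ q = e⁻¹ := by rw [← hφ, map_inv₀, hφ, he]
        rw [mul_pow, hinv, hγq]; ring
    rw [hset, Finset.card_singleton]
  · -- γ ≠ 0, e = 0 : Z = 0
    intro hγ0 he0
    rw [hZg, Finset.card_eq_zero, Finset.filter_eq_empty_iff]
    intro y _
    rw [hsol hγ0 y]
    rintro ⟨h1, h2⟩
    rw [he0, zero_mul] at h2
    exact hγ0 h2.symm
  · -- γ = 0, e ≠ 0 : Z = q + 1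
    intro hγ0 he0
    rw [hZg]
    have hset : (univ.filter fun y : K => y * ((y ^ q + y) - e) + γ = 0)
        = insert (0 : K) (univ.filter fun y : K => y ^ q + y = e) := by
      ext y
      simp only [mem_filter, mem_univ, true_and, mem_insert]
      rw [hγ0, add_zero, mul_eq_zero, sub_eq_zero]
    rw [hset, Finset.card_insert_of_notMem, hfibq e he]
    intro h0
    rw [mem_filter] at h0
    apply he0
    have := h0.2
    rw [zero_pow hq0, add_zero] at this
    exact this.symm
  · -- γ = 0, e = 0 : Z = q
    intro hγ0 he0
    rw [hZg]
    have hset : (univ.filter fun y : K => y * ((y ^ q + y) - e) + γ = 0)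
        = univ.filter fun y : K => y ^ q + y = 0 := by
      apply Finset.filter_congr; intro y _
      rw [hγ0, he0, add_zero, sub_zero, mul_eq_zero]
      constructor
      · rintro (rfl | h)
        · rw [zero_pow hq0, add_zero]
        · exact h
      · intro h; exact Or.inr h
    rw [hset, hfibq 0 (by rw [zero_pow hq0])]
end

section
/- Let q be a power of 2, let a, b, c ∈ F_{q²} and d ∈ F_{q²} \ F_q, and suppose a² + ab + c ∈ {0, Tr(a + b)²} and a + b + d = 0. Then (x^{q+1} + x² + a·x^q + b·x + c)/(x^q + x + d) is a permutation rational function of F_{q²}. -/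
open Finset

private lemma aux13 {K : Type} [Field K] (h2 : (2:K) = 0) (φ : K →+* K)
    (s u u' A B : K)
    (hs : s ≠ 0) (hu : u ≠ 0) (hu' : u' ≠ 0) (hA : A ≠ 0) (hA' : A + s ≠ 0)
    (hB : B ≠ 0)
    (hφu : φ u = u') (hφu' : φ u' = u) (hφA : φ A = A + s) (hφs : φ s = s)
    (E1 : u * (A * B) = s ^ 2 * (A + B)) (E2 : u' * ((A + s) * (B + s)) = s ^ 2 * (A + B))
    (hABt : A + B = u + u') : False := by
  have ht : u + u' ≠ 0 := by
    intro h
    have h0 : u * (A * B) = 0 := by rw [E1, hABt, h, mul_zero]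
    exact (mul_ne_zero hu (mul_ne_zero hA hB)) h0
  have E3 : A * B * (u + u') = s * u' * ((u + u') + s) := by
    linear_combination E1 + E2 + (s*u') * hABt +
      ((-1)*s*u'*B + (-1)*s*u'*A + s^2*B + s^2*A + (-1)*s^2*u') * h2
  have E4s : s * (u * u' * ((u + u') + s)) = s * (s * (u + u') ^ 2) := by
    linear_combination (B + A + u) * E1 + (B + A + u') * E2 +
      (u'*A*B + u*A*B + s*u'*B + s*u'*A + s*u*u' + s^2*u) * hABt +
      ((-1)*u'*A*B^2 + (-1)*u'*A^2*B + (-1)*u*A*B^2 + (-1)*u*A^2*B + u*u'*A*B +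
        (-1)*s*u'*B^2 + (-2)*s*u'*A*B + (-1)*s*u'*A^2 + s*u*u'^2 + s*u^2*u' + s^2*B^2 +
        (2)*s^2*A*B + s^2*A^2 + (-1)*s^2*u'^2) * h2
  have E4 : u * u' * ((u + u') + s) = s * (u + u') ^ 2 := mul_left_cancel₀ hs E4s
  have key : s * ((u + u') ^ 2 + u * u') = (u * u') * (u + u') := by
    linear_combination -E4 + (s*u*u') * h2
  have hN : u * u' ≠ 0 := mul_ne_zero hu hu'
  have htN : (u + u') ^ 2 + u * u' ≠ 0 := by
    intro h
    have h0 := key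
    rw [h, mul_zero] at h0
    exact (mul_ne_zero hN ht) h0.symm
  have C0 : u*s*A^2 + u*u'*(A*(A+s)) + s*u'*(A+s)^2 = 0 := by
    linear_combination (u' + s) * E1 + (s) * E2 + (u*u'*A + s*u'*A + s*u*A) * hABt + (A) * E4 +
      ((-1)*u*u'*A*B + (-1)*s*u'*A*B + s*u'^2*A + (-1)*s*u*A*B + (2)*s*u*u'*A + s*u^2*A +
        s^2*u'*A + s^3*B + s^3*A) * h2
  have C1 : (s*((u+u')^2 + u*u')*A + u'*(u+u')^2*(A+s)) *
      (s*((u+u')^2 + u*u')*A + u'*(u*u')*(A+s)) = 0 := by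
    linear_combination (u'^4 + u^3*u') * C0 +
      (u^2*u'*A^2 + s*u'^2*A^2 + s*u'^3*A + s*u*u'*A^2 + s*u*u'^2*A + s*u^2*A^2 + s*u^2*u'*A +
        s^2*u'^3 + s^2*u*u'^2) * key +
      (u^2*u'^4*A^2 + u^3*u'^3*A^2 + (3)*s*u*u'^4*A^2 + s*u*u'^5*A + (6)*s*u^2*u'^3*A^2 +
        (3)*s*u^2*u'^4*A + (2)*s*u^3*u'^2*A^2 + (2)*s*u^3*u'^3*A + (-1)*s^2*u'^5*A +
        s^2*u*u'^3*A^2 + s^2*u*u'^4*A + s^2*u*u'^5 + (3)*s^2*u^2*u'^2*A^2 + (3)*s^2*u^2*u'^3*A +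
        (2)*s^2*u^2*u'^4 + s^2*u^3*u'*A^2 + s^2*u^3*u'^3 + (-1)*s^3*u'^5 + (-2)*s^3*u*u'^4 +
        (-2)*s^3*u^2*u'^3 + (-1)*s^3*u^3*u'^2) * h2
  have hfinal : u * u' = (u + u') ^ 2 := by
    rcases mul_eq_zero.mp C1 with hP1 | hP1
    · have e2 : s * ((u + u') ^ 2 + u * u') * (A + s) + u * (u + u') ^ 2 * (A + s + s) = 0 := by
        have h := congrArg φ hP1
        simp only [map_add, map_mul, map_pow, map_zero] at h
        rw [hφu, hφu', hφA, hφs] at h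
        linear_combination h
      have hM : (s*((u+u')^2+u*u'))^2 * (A*(A+s)) = (u*u'*(u+u')^4) * (A*(A+s)) := by
        linear_combination (u*u'^2*A + u^3*A) * hP1 + (s*u'^2*A + s*u*u'*A + s*u^2*A) * e2 +
          ((-1)*u*u'^5*A^2 + (-3)*u^2*u'^4*A^2 + (-4)*u^3*u'^3*A^2 + (-3)*u^4*u'^2*A^2 +
            (-1)*u^5*u'*A^2 + (-1)*s*u*u'^4*A^2 + (-1)*s*u*u'^5*A + (-3)*s*u^2*u'^3*A^2 +
            (-3)*s*u^2*u'^4*A + (-3)*s*u^3*u'^2*A^2 + (-4)*s*u^3*u'^3*A + (-3)*s*u^4*u'*A^2 +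
            (-3)*s*u^4*u'^2*A + (-1)*s*u^5*A^2 + (-1)*s*u^5*u'*A + s^2*u*u'^3*A^2 +
            (-1)*s^2*u*u'^4*A + (3)*s^2*u^2*u'^2*A^2 + (-3)*s^2*u^2*u'^3*A + s^2*u^3*u'*A^2 +
            (-4)*s^2*u^3*u'^2*A + (-3)*s^2*u^4*u'*A + (-1)*s^2*u^5*A + s^3*u*u'^3*A +
            (3)*s^3*u^2*u'^2*A + s^3*u^3*u'*A) * h2
      have hM2 : (s*((u+u')^2+u*u'))^2 = u*u'*(u+u')^4 :=
        mul_right_cancel₀ (mul_ne_zero hA hA') hM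
      have h6 : (u*u')^2*(u+u')^2 = (u*u')*(u+u')^4 := by
        linear_combination hM2 + (u*u'^2 + u^2*u' + s*u'^2 + s*u*u' + s*u^2) * key +
          (u^2*u'^4 + (2)*u^3*u'^3 + u^4*u'^2 + (-1)*s*u^2*u'^3 + (-1)*s*u^3*u'^2 +
            (-1)*s^2*u'^4 + (-5)*s^2*u*u'^3 + (-8)*s^2*u^2*u'^2 + (-5)*s^2*u^3*u' +
            (-1)*s^2*u^4) * h2
      have h6' : (u*u'*(u+u')^2) * (u*u') = (u*u'*(u+u')^2) * ((u+u')^2) := by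
        linear_combination h6
      exact mul_left_cancel₀ (mul_ne_zero hN (pow_ne_zero 2 ht)) h6'
    · have e2 : s * ((u + u') ^ 2 + u * u') * (A + s) + u * (u * u') * (A + s + s) = 0 := by
        have h := congrArg φ hP1
        simp only [map_add, map_mul, map_pow, map_zero] at h
        rw [hφu, hφu', hφA, hφs] at h
        linear_combination h
      have hM : (s*((u+u')^2+u*u'))^2 * (A*(A+s)) = ((u*u')^3) * (A*(A+s)) := by
        linear_combination (s*u'^2*A + s*u*u'*A + s*u^2*A + s^2*u'^2 + s^2*u*u' + s^2*u^2) * hP1 +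
          (u*u'^2*A + s*u*u'^2) * e2 +
          ((-1)*u^3*u'^3*A^2 + (-1)*s*u*u'^4*A^2 + (-2)*s*u^2*u'^3*A^2 + (-1)*s*u^3*u'^2*A^2 +
            (-2)*s*u^3*u'^3*A + s^2*u*u'^3*A^2 + (-2)*s^2*u*u'^4*A + (3)*s^2*u^2*u'^2*A^2 +
            (-4)*s^2*u^2*u'^3*A + s^2*u^3*u'*A^2 + (-2)*s^2*u^3*u'^2*A + (-1)*s^2*u^3*u'^3 +
            s^3*u*u'^3*A + (-1)*s^3*u*u'^4 + (3)*s^3*u^2*u'^2*A + (-2)*s^3*u^2*u'^3 +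
            s^3*u^3*u'*A + (-1)*s^3*u^3*u'^2) * h2
      have hM2 : (s*((u+u')^2+u*u'))^2 = (u*u')^3 :=
        mul_right_cancel₀ (mul_ne_zero hA hA') hM
      have h6 : (u*u')^2*(u+u')^2 = (u*u')^3 := by
        linear_combination hM2 + (u*u'^2 + u^2*u' + s*u'^2 + s*u*u' + s*u^2) * key +
          (u^2*u'^4 + (2)*u^3*u'^3 + u^4*u'^2 + (-1)*s*u^2*u'^3 + (-1)*s*u^3*u'^2 +
            (-1)*s^2*u'^4 + (-5)*s^2*u*u'^3 + (-8)*s^2*u^2*u'^2 + (-5)*s^2*u^3*u' +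
            (-1)*s^2*u^4) * h2
      have h6' : ((u*u')^2) * ((u+u')^2) = ((u*u')^2) * (u*u') := by
        linear_combination h6
      exact (mul_left_cancel₀ (pow_ne_zero 2 hN) h6').symm
  have h7 : (u+u')^3 = 0 := by
    linear_combination key + (u' + u + s) * hfinal +
      (u'^3 + (3)*u*u'^2 + (3)*u^2*u' + u^3 + (-1)*s*u*u') * h2
  exact ht ((pow_eq_zero_iff three_ne_zero).mp h7)

/-- Let `q` be a power of `2`, `a, b, c ∈ F_{q²}`, `d ∈ F_{q²} \ F_q`, with
`a² + ab + c ∈ {0, Tr(a + b)²}` and `a + b + d = 0`. Then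
`(x^{q+1} + x² + a·x^q + b·x + c)/(x^q + x + d)` is a permutation rational function of
`F_{q²}`. Here `K` plays the role of `F_{q²}`, `F_q = {x : K | x^q = x}`,
`Tr(x) = x^q + x`, and since `x^q + x + d` has no zero in `F_{q²}`, being a permutation
rational function is equivalent to the map
`x ↦ (x^{q+1} + x² + a·x^q + b·x + c)/(x^q + x + d)` permuting `F_{q²}`. -/
theorem stmt13 (n q : ℕ) (hn : 0 < n) (hq : q = 2 ^ n)
    (K : Type) [Field K] [Fintype K] (hK : Fintype.card K = q ^ 2)
    (a b c d : K) (hd : d ^ q ≠ d)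
    (hc : a ^ 2 + a * b + c = 0 ∨
      a ^ 2 + a * b + c = ((a + b) ^ q + (a + b)) ^ 2)
    (habd : a + b + d = 0) :
    Function.Bijective (fun x : K =>
      (x ^ (q + 1) + x ^ 2 + a * x ^ q + b * x + c) / (x ^ q + x + d)) := by
  have hq0 : q ≠ 0 := by rw [hq]; positivity
  obtain ⟨p, hpC⟩ := CharP.exists K
  haveI := hpC
  have hprime : Nat.Prime p := CharP.char_is_prime K p
  obtain ⟨m, hm, hcard⟩ := FiniteField.card K p
  have hp2 : p = 2 := by
    have hpq : p ^ (m:ℕ) = 2 ^ (n*2) := by rw [← hcard, hK, hq, ← pow_mul]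
    have h1 : p ∣ 2 ^ (n*2) := hpq ▸ dvd_pow_self p m.ne_zero
    exact (Nat.prime_dvd_prime_iff_eq hprime Nat.prime_two).mp (hprime.dvd_of_dvd_pow h1)
  subst hp2
  have h2 : (2:K) = 0 := by exact_mod_cast CharP.cast_eq_zero K 2
  have frob_add : ∀ z w : K, (z + w) ^ q = z ^ q + w ^ q := by
    intro z w; rw [hq]; exact add_pow_char_pow z w 2 n
  have frob_frob : ∀ z : K, (z ^ q) ^ q = z := by
    intro z
    have hqq : q * q = Fintype.card K := by rw [hK]; ring
    rw [← pow_mul, hqq, FiniteField.pow_card]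
  let φ : K →+* K :=
    { toFun := fun z => z ^ q
      map_one' := one_pow q
      map_mul' := fun z w => mul_pow z w q
      map_zero' := zero_pow hq0
      map_add' := frob_add }
  have hD : ∀ z : K, z ^ q + z + d ≠ 0 := by
    intro z h
    apply hd
    have h1 : (z ^ q + z + d) ^ q = z + z ^ q + d ^ q := by
      rw [frob_add, frob_add, frob_frob]
    rw [h, zero_pow hq0] at h1
    linear_combination -h1 - h
  have hb : b = a + d := by linear_combination b*h2 - habd
  rcases hc with hc0 | hcs
  · -- case a^2 + ab + c = 0 : the map is x ↦ x + a
    have hcc : c = a * d := by linear_combination -hc0 + a*hb + (c + a^2)*h2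
    have hfun : (fun x : K =>
        (x ^ (q + 1) + x ^ 2 + a * x ^ q + b * x + c) / (x ^ q + x + d)) =
        fun x : K => x + a := by
      funext x
      rw [div_eq_iff (hD x)]
      linear_combination x*hb + hcc
    rw [hfun]
    exact ⟨fun x y h => by linear_combination h, fun y => ⟨y - a, by ring⟩⟩
  · -- main case
    have hab : a + b = d := by linear_combination habd - d*h2
    rw [hab] at hcs
    have hs : d ^ q + d ≠ 0 := by
      intro h; apply hd; linear_combination h - d*h2
    have hcc : c = a*d + (d^q + d)^2 := by linear_combination hcs - a*hab - a*d*h2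
    have I1 : ∀ z : K, z ^ (q+1) + z^2 + a*z^q + b*z + c =
        (z + a) * (z^q + z + d) + (d^q+d)^2 := by
      intro z; linear_combination z*hb + hcc
    rw [← Finite.injective_iff_bijective]
    intro x y hxy
    by_contra hne
    simp only at hxy
    rw [div_eq_div_iff (hD x) (hD y)] at hxy
    have hu : x + y ≠ 0 := fun h => hne (by linear_combination h - y*h2)
    have hAq : (x^q + x + d)^q = (x^q + x + d) + (d^q + d) := by
      have h1 : (x^q+x+d)^q = x + x^q + d^q := by rw [frob_add, frob_add, frob_frob]
      rw [h1]; linear_combination -d*h2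
    have hBq : (y^q + y + d)^q = (y^q + y + d) + (d^q + d) := by
      have h1 : (y^q+y+d)^q = y + y^q + d^q := by rw [frob_add, frob_add, frob_frob]
      rw [h1]; linear_combination -d*h2
    have hsq : (d^q + d)^q = d^q + d := by
      rw [frob_add, frob_frob]; ring
    have E1 : (x+y) * ((x^q+x+d) * (y^q+y+d)) = (d^q+d)^2 * ((x^q+x+d) + (y^q+y+d)) := by
      linear_combination hxy - (y^q+y+d)*(I1 x) + (x^q+x+d)*(I1 y) +
        ((-1)*(d^q)^2*(y^q) + (-2)*d*(d^q)*(y^q) + (-1)*d*(d^q)^2 + (-1)*d^2*(y^q) +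
          (-2)*d^2*(d^q) + (-1)*d^3 + y*(x^q)*(y^q) + (-1)*y*(d^q)^2 + y*d*(y^q) + y*d*(x^q) +
          (-2)*y*d*(d^q) + y^2*(x^q) + y^2*d + x*y*(y^q) + x*y*d + x*y^2) * h2
    have E2 : (x+y)^q * (((x^q+x+d) + (d^q+d)) * ((y^q+y+d) + (d^q+d))) =
        (d^q+d)^2 * ((x^q+x+d) + (y^q+y+d)) := by
      have h1 : ((x+y) * ((x^q+x+d)*(y^q+y+d)))^q =
          ((d^q+d)^2 * ((x^q+x+d)+(y^q+y+d)))^q := by rw [E1]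
      rw [mul_pow, mul_pow, mul_pow, frob_add (x^q+x+d) (y^q+y+d), hAq, hBq,
        pow_right_comm (d^q+d) 2 q, hsq] at h1
      linear_combination h1 + (d^q+d)^3 * h2
    have hABt : (x^q+x+d) + (y^q+y+d) = (x+y) + (x+y)^q := by
      have hf : (x+y)^q = x^q + y^q := frob_add x y
      linear_combination -hf + d*h2
    exact aux13 h2 φ (d^q+d) (x+y) ((x+y)^q) (x^q+x+d) (y^q+y+d)
      hs hu (pow_ne_zero q hu) (hD x) (hAq ▸ pow_ne_zero q (hD x)) (hD y)
      rfl (frob_frob _) hAq hsq E1 E2 hABt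
end

section
/- Let q be a power of 2. For all α, β ∈ F_{q²} with Tr(α + β) ≠ 0, the cubic polynomial x³ + Tr(β)·x² + (Tr(α² + αβ) + N(α) + N(β))·x + Tr(α + β)³ + Tr(α)·N(α + β) has exactly one zero in F_q. -/
open Finset
open scoped Classical

/-- Let `q` be a power of `2`. For all `α, β ∈ F_{q²}` with `Tr(α + β) ≠ 0`,
the cubic `x³ + Tr(β)·x² + (Tr(α² + αβ) + N(α) + N(β))·x + Tr(α + β)³ + Tr(α)·N(α + β)`
has exactly one zero in `F_q`.
Here `K` plays the role of `F_{q²}`, `F_q = {x : K | x^q = x}`, `Tr(x) = x^q + x` and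
`N(x) = x^{q+1}`. -/
theorem stmt14 (n q : ℕ) (hn : 0 < n) (hq : q = 2 ^ n)
    (K : Type) [Field K] [Fintype K] (hK : Fintype.card K = q ^ 2) :
    ∀ α β : K, (α + β) ^ q + (α + β) ≠ 0 →
      (Finset.univ.filter (fun x : K => x ^ q = x ∧
        x ^ 3 + (β ^ q + β) * x ^ 2 +
          (((α ^ 2 + α * β) ^ q + (α ^ 2 + α * β)) + α ^ (q + 1) + β ^ (q + 1)) * x +
          ((α + β) ^ q + (α + β)) ^ 3 + (α ^ q + α) * (α + β) ^ (q + 1) = 0)).card = 1 := by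
  intro α β hT0
  have hq0 : q ≠ 0 := by rw [hq]; positivity
  have hq1 : 1 ≤ q := Nat.one_le_iff_ne_zero.mpr hq0
  -- characteristic 2
  have h2 : (2 : K) = 0 := by
    have hcard0 : ((Fintype.card K : K)) = 0 := FiniteField.cast_card_eq_zero K
    rw [hK, hq] at hcard0
    push_cast at hcard0
    have h : ((2 : K)) ^ (n * 2) = 0 := by rw [pow_mul]; exact_mod_cast hcard0
    exact pow_eq_zero_iff (by positivity) |>.mp h
  haveI : Fact (Nat.Prime 2) := ⟨Nat.prime_two⟩
  have hrc : ringChar K = 2 := by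
    have hdvd : ringChar K ∣ 2 := ringChar.dvd (by exact_mod_cast h2)
    exact ((Nat.dvd_prime Nat.prime_two).mp hdvd).resolve_left CharP.ringChar_ne_one
  haveI : CharP K 2 := hrc ▸ ringChar.charP K
  have frob : ∀ x y : K, (x + y) ^ q = x ^ q + y ^ q := by
    intro x y; rw [hq]; exact add_pow_char_pow x y 2 n
  have frobs : ∀ x y : K, (x - y) ^ q = x ^ q - y ^ q := by
    intro x y; rw [hq]; exact sub_pow_char_pow x y n
  have hqq : ∀ x : K, (x ^ q) ^ q = x := by
    intro x
    have hpc := FiniteField.pow_card x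
    rw [hK] at hpc
    calc (x ^ q) ^ q = x ^ (q * q) := (pow_mul x q q).symm
      _ = x ^ (q ^ 2) := by rw [pow_two]
      _ = x := hpc
  obtain ⟨Aq, hAq⟩ : ∃ t : K, α ^ q = t := ⟨_, rfl⟩
  obtain ⟨Bq, hBq⟩ : ∃ t : K, β ^ q = t := ⟨_, rfl⟩
  have hAA : Aq ^ q = α := by rw [← hAq]; exact hqq α
  have hBB : Bq ^ q = β := by rw [← hBq]; exact hqq β
  simp only [hAq, hBq]
  obtain ⟨T, hTd⟩ : ∃ t : K, Aq + Bq + α + β = t := ⟨_, rfl⟩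
  obtain ⟨G, hGd⟩ : ∃ t : K, α + Bq = t := ⟨_, rfl⟩
  obtain ⟨Bb, hBbd⟩ : ∃ t : K, Bq + β = t := ⟨_, rfl⟩
  obtain ⟨E, hEd⟩ : ∃ t : K, G ^ 2 + T * G + T ^ 2 = t := ⟨_, rfl⟩
  have hT : T ≠ 0 := by
    have h : (α + β) ^ q + (α + β) = T := by rw [frob, hAq, hBq, ← hTd]; ring
    rw [← h]; exact hT0
  have hTq : T ^ q = T := by
    rw [← hTd, frob, frob, frob, hAA, hBB, hAq, hBq]; ring
  have hGq : G ^ q = T + G := by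
    rw [← hGd, ← hTd, frob, hAq, hBB]
    linear_combination (-α - Bq) * h2
  have hBbq : Bb ^ q = Bb := by rw [← hBbd, frob, hBB, hBq]; ring
  have hEq : E ^ q = E := by
    rw [← hEd, frob, frob, mul_pow, pow_right_comm G 2 q, pow_right_comm T 2 q, hGq, hTq]
    linear_combination (T ^ 2 + T * G) * h2
  have hF : ∀ x : K, x ^ 3 + (Bq + β) * x ^ 2 +
      (((α ^ 2 + α * β) ^ q + (α ^ 2 + α * β)) + α ^ (q + 1) + β ^ (q + 1)) * x +
      ((α + β) ^ q + (α + β)) ^ 3 + (Aq + α) * (α + β) ^ (q + 1) =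
      (x + Bb) ^ 3 + E * (x + Bb) + T * E := by
    intro x
    rw [pow_succ α q, pow_succ β q, pow_succ (α + β) q, frob α β,
      frob (α ^ 2) (α * β), mul_pow α β q, pow_right_comm α 2 q, hAq, hBq,
      ← hEd, ← hGd, ← hTd, ← hBbd]
    linear_combination (-3*Bq^3 - 6*β*Bq^2 - 4*β^2*Bq - β^3 - 3*Aq*Bq^2 - 3*Aq*β*Bq
      - Aq*β^2 - Aq^2*Bq - 6*α*Bq^2 - 7*α*β*Bq - 2*α*β^2 - 4*α*Aq*Bq - 2*α*Aq*β
      - 4*α^2*Bq - 3*α^2*β - α^2*Aq - α^3 - 3*x*Bq^2 - 4*x*β*Bq - 2*x*β^2 - x*Aq*Bq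
      - x*Aq*β - 3*x*α*Bq - x*α*β - x*α*Aq - x*α^2 - x^2*Bq - x^2*β) * h2
  -- uniqueness of roots of y³ + Ey + TE among fixed points
  have key : ∀ y1 y2 : K, y1 ^ q = y1 → y2 ^ q = y2 →
      y1 ^ 3 + E * y1 + T * E = 0 → y2 ^ 3 + E * y2 + T * E = 0 → y1 = y2 := by
    intro y1 y2 hy1f hy2f h1 hg2
    by_contra hne
    by_cases hE : E = 0
    · rw [hE] at h1 hg2
      have e1 : y1 ^ 3 = 0 := by linear_combination h1
      have e2 : y2 ^ 3 = 0 := by linear_combination hg2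
      exact hne (by
        rw [pow_eq_zero_iff (by norm_num : (3:ℕ) ≠ 0) |>.mp e1,
          pow_eq_zero_iff (by norm_num : (3:ℕ) ≠ 0) |>.mp e2])
    · have hy1 : y1 ≠ 0 := by
        rintro rfl
        have hTE : T * E = 0 := by linear_combination h1
        rcases mul_eq_zero.mp hTE with h | h
        · exact hT h
        · exact hE h
      have hfac : (y1 - y2) * (y1 ^ 2 + y1 * y2 + y2 ^ 2 + E) = 0 := by
        linear_combination h1 - hg2
      have hR2 : y1 ^ 2 + y1 * y2 + y2 ^ 2 + E = 0 :=
        (mul_eq_zero.mp hfac).resolve_left (sub_ne_zero.mpr hne)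
      have hWW : (y2 * T + y1 ^ 2 + G * y1) * ((y2 * T + y1 ^ 2 + G * y1) + y1 * T) = 0 := by
        linear_combination (T + y1) * h1 + T ^ 2 * hR2 + ((y1 + T) ^ 2 + T ^ 2) * hEd +
          (-(T^2*G^2) - T^3*G - T^4 - y1*T*G^2 - y1*T^2*G - y1*T^3 + y1*y2*T*G
            - y1^2*T^2 + y1^2*y2*T + y1^3*G) * h2
      have hWq : (y2 * T + y1 ^ 2 + G * y1) ^ q = y2 * T + y1 ^ 2 + (T + G) * y1 := by
        rw [frob, frob, mul_pow, mul_pow, pow_right_comm y1 2 q, hy1f, hy2f, hTq, hGq]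
      rcases mul_eq_zero.mp hWW with h0 | h0
      · have hz : (0 : K) = y2 * T + y1 ^ 2 + (T + G) * y1 := by
          rw [← hWq, h0, zero_pow hq0]
        have hTy : T * y1 = 0 := by linear_combination -hz - h0
        exact mul_ne_zero hT hy1 hTy
      · have hzq : (0 : K) = ((y2 * T + y1 ^ 2 + G * y1) + y1 * T) ^ q := by
          rw [h0, zero_pow hq0]
        have hWq2 : ((y2 * T + y1 ^ 2 + G * y1) + y1 * T) ^ q
            = (y2 * T + y1 ^ 2 + (T + G) * y1) + y1 * T := by
          rw [frob, hWq, mul_pow, hy1f, hTq]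
        have hTy : T * y1 = 0 := by linear_combination -hzq - hWq2 - h0
        exact mul_ne_zero hT hy1 hTy
  -- a primitive cube root of unity
  have hq3 : q % 3 = 1 ∨ q % 3 = 2 := by
    have h3 : ¬ (3 ∣ q) := by
      rw [hq]
      intro h
      have := Nat.Prime.dvd_of_dvd_pow Nat.prime_three h
      norm_num at this
    omega
  have hdvd3 : 3 ∣ Fintype.card Kˣ := by
    rw [Fintype.card_units, hK]
    have h1 : q ^ 2 % 3 = 1 := by
      rw [pow_two, Nat.mul_mod]
      rcases hq3 with h | h <;> rw [h]
    have h2' : 1 ≤ q ^ 2 := Nat.one_le_pow _ _ (by omega)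
    omega
  haveI : Fact (Nat.Prime 3) := ⟨Nat.prime_three⟩
  obtain ⟨μ0, hμ0⟩ := exists_prime_orderOf_dvd_card (G := Kˣ) 3 hdvd3
  obtain ⟨μ, hμd⟩ : ∃ t : K, ((μ0 : Kˣ) : K) = t := ⟨_, rfl⟩
  have hμ3 : μ ^ 3 = 1 := by
    rw [← hμd]
    have h := pow_orderOf_eq_one μ0
    rw [hμ0] at h
    rw [← Units.val_pow_eq_pow_val, h, Units.val_one]
  have hμ1 : μ ≠ 1 := by
    intro h
    have hval : μ0 = 1 := Units.ext (by rw [← hμd] at h; simpa using h)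
    rw [hval, orderOf_one] at hμ0
    norm_num at hμ0
  have hμ : μ ^ 2 + μ + 1 = 0 := by
    have hfac : (μ - 1) * (μ ^ 2 + μ + 1) = 0 := by linear_combination hμ3
    exact (mul_eq_zero.mp hfac).resolve_left (sub_ne_zero.mpr hμ1)
  obtain ⟨c, hcd⟩ : ∃ t : K, G + μ * T = t := ⟨_, rfl⟩
  have hc2 : c ^ 2 + T * c + E = 0 := by
    rw [← hcd, ← hEd]
    linear_combination T ^ 2 * hμ + (G ^ 2 + G * T * μ + G * T) * h2
  -- existence of a root
  have hex : ∃ x0 : K, x0 ^ q = x0 ∧ (x0 + Bb) ^ 3 + E * (x0 + Bb) + T * E = 0 := by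
    by_cases hE : E = 0
    · refine ⟨Bb, hBbq, ?_⟩
      rw [hE]
      linear_combination (4 * Bb ^ 3) * h2
    · have hc0 : c ≠ 0 := by
        intro h
        apply hE
        rw [h] at hc2
        linear_combination hc2
      have hzz : ∃ z : K, z ≠ 0 ∧ z ^ 3 = E * c ∧
          ((z ^ 2 + E) / z) ^ q = (z ^ 2 + E) / z := by
        rcases hq3 with hq31 | hq32
        · -- q ≡ 1 (mod 3)
          obtain ⟨s, hs⟩ : ∃ s, q = 3 * s + 1 := ⟨q / 3, by omega⟩
          have hμq : μ ^ q = μ := by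
            rw [hs, pow_succ, pow_mul, hμ3, one_pow, one_mul]
          have hcq : c ^ q = c + T := by
            rw [← hcd, frob, mul_pow, hμq, hTq, hGq]; ring
          have hccq : c ^ q * c = E := by
            rw [hcq]
            linear_combination hc2 - E * h2
          have hE1 : E ^ (q - 1) = 1 := by
            have hh : E ^ (q - 1) * E = 1 * E := by
              rw [one_mul, ← pow_succ, Nat.sub_add_cancel hq1, hEq]
            exact mul_right_cancel₀ hE hh
          obtain ⟨m, hm⟩ : ∃ m, 3 * m = q * q + q + 1 :=
            ⟨3 * s * s + 3 * s + 1, by rw [hs]; ring⟩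
          have hz0m : c ^ m ≠ 0 := pow_ne_zero _ hc0
          have hz3 : (c ^ m) ^ 3 = E * c := by
            have h1 : (c ^ m) ^ 3 = c ^ (q * q + q + 1) := by
              rw [← pow_mul, mul_comm m 3, hm]
            rw [h1, pow_add, pow_add, pow_mul, hqq c, pow_one]
            linear_combination c * hccq
          have hzq : (c ^ m) ^ q = E / (c ^ m) := by
            rw [eq_div_iff hz0m, pow_right_comm c m q, ← mul_pow, hccq]
            have h1 : q - 1 = 3 * s := by omega
            have h3 : 3 * m = 3 * ((q - 1) * (s + 1) + 1) := by rw [hm, h1, hs]; ring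
            have hm1 : m = (q - 1) * (s + 1) + 1 :=
              Nat.eq_of_mul_eq_mul_left (by norm_num) h3
            rw [hm1, pow_succ, pow_mul, hE1, one_pow, one_mul]
          refine ⟨c ^ m, hz0m, hz3, ?_⟩
          rw [div_pow, frob ((c ^ m) ^ 2) E, pow_right_comm (c ^ m) 2 q, hEq, hzq]
          field_simp
          ring
        · -- q ≡ 2 (mod 3)
          obtain ⟨k, hk⟩ : ∃ k, q = 3 * k + 2 := ⟨q / 3, by omega⟩
          have hμq : μ ^ q = μ ^ 2 := by
            rw [hk, pow_add, pow_mul, hμ3, one_pow, one_mul]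
          have hcq : c ^ q = c := by
            rw [← hcd, frob, mul_pow, hμq, hTq, hGq]
            linear_combination T * hμ + (-(μ * T)) * h2
          obtain ⟨w1, hw1d⟩ : ∃ t : K, E * c = t := ⟨_, rfl⟩
          have hw1q : w1 ^ q = w1 := by rw [← hw1d, mul_pow, hEq, hcq]
          have hw10 : w1 ≠ 0 := by rw [← hw1d]; exact mul_ne_zero hE hc0
          have hw1E : w1 ^ (q - 1) = 1 := by
            have hh : w1 ^ (q - 1) * w1 = 1 * w1 := by
              rw [one_mul, ← pow_succ, Nat.sub_add_cancel hq1, hw1q]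
            exact mul_right_cancel₀ hw10 hh
          obtain ⟨e, he⟩ : ∃ e, e * 3 = (q - 1) * 2 + 1 := ⟨2 * k + 1, by omega⟩
          have hz3 : (w1 ^ e) ^ 3 = E * c := by
            rw [← pow_mul, he, pow_succ, pow_mul, hw1E, one_pow, one_mul, hw1d]
          have hzq : (w1 ^ e) ^ q = w1 ^ e := by rw [pow_right_comm, hw1q]
          refine ⟨w1 ^ e, pow_ne_zero _ hw10, hz3, ?_⟩
          rw [div_pow, frob ((w1 ^ e) ^ 2) E, pow_right_comm (w1 ^ e) 2 q, hzq, hEq]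
      obtain ⟨z, hz0, hz3, hzfix⟩ := hzz
      refine ⟨(z ^ 2 + E) / z - Bb, ?_, ?_⟩
      · rw [frobs, hzfix, hBbq]
      · have hy : (z ^ 2 + E) / z - Bb + Bb = (z ^ 2 + E) / z := by ring
        rw [hy]
        have hmain : (z ^ 2 + E) ^ 3 + E * z ^ 2 * (z ^ 2 + E) + T * E * z ^ 3 = 0 := by
          linear_combination (E * T + E * c + z ^ 3) * hz3 + E ^ 2 * hc2 +
            (2 * z ^ 2 * E ^ 2 + 2 * z ^ 4 * E) * h2
        have hsplit : ((z ^ 2 + E) / z) ^ 3 + E * ((z ^ 2 + E) / z) + T * E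
            = ((z ^ 2 + E) ^ 3 + E * z ^ 2 * (z ^ 2 + E) + T * E * z ^ 3) / z ^ 3 := by
          field_simp
        rw [hsplit, hmain, zero_div]
  obtain ⟨x0, hx0f, hx0r⟩ := hex
  rw [Finset.card_eq_one]
  refine ⟨x0, ?_⟩
  ext x
  simp only [Finset.mem_filter, Finset.mem_univ, true_and, Finset.mem_singleton]
  constructor
  · rintro ⟨hxf, hxr⟩
    rw [hF x] at hxr
    have h1 : (x + Bb) ^ q = x + Bb := by rw [frob, hxf, hBbq]
    have h2' : (x0 + Bb) ^ q = x0 + Bb := by rw [frob, hx0f, hBbq]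
    exact add_right_cancel (key (x + Bb) (x0 + Bb) h1 h2' hxr hx0r)
  · rintro rfl
    exact ⟨hx0f, by rw [hF _]; exact hx0r⟩
end

section
/- Let a, b, c ∈ F_{q²} with a^q + b ∈ F_q. Then Σ_{u ∈ F_q, u ≠ 0} Σ_{w ∈ F_{q²}} χ(u·w^{q+1} + u·w² + (a^q·u^q + b·u)·w + c·u) = η((a^q + b)² − 4Tr(c)) · q². -/
open Finset Polynomial
open scoped Classical

lemma aux_roots_card {K : Type} [Field K] [Fintype K]
    (f : Polynomial K) (hf : f ≠ 0) :
    (Finset.univ.filter fun y : K => f.eval y = 0).card ≤ f.natDegree := by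
  classical
  have h : (Finset.univ.filter fun y : K => f.eval y = 0) ⊆ f.roots.toFinset := by
    intro y hy
    rw [Multiset.mem_toFinset, Polynomial.mem_roots hf]
    exact (Finset.mem_filter.mp hy).2
  calc (Finset.univ.filter fun y : K => f.eval y = 0).card
      ≤ f.roots.toFinset.card := Finset.card_le_card h
    _ ≤ Multiset.card f.roots := Multiset.toFinset_card_le _
    _ ≤ f.natDegree := f.card_roots'

lemma aux_card_linroots {K : Type} [Field K] [Fintype K] (m : ℕ) (hm : 1 < m) (c : K) :
    (Finset.univ.filter fun y : K => y ^ m + c * y = 0).card ≤ m := by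
  classical
  set f : Polynomial K := X ^ m + C c * X with hfdef
  have hco : f.coeff m = 1 := by
    have h1 : m ≠ 1 := by omega
    simp only [hfdef, coeff_add, coeff_X_pow, coeff_C_mul, coeff_X, if_pos rfl]
    rw [if_neg (by omega : ¬ 1 = m)]; simp
  have hf : f ≠ 0 := fun h => by simp [h] at hco
  have hdeg : f.natDegree ≤ m := by
    rw [hfdef]
    apply natDegree_add_le_of_degree_le (by simp)
    exact (natDegree_C_mul_le _ _).trans (by simpa using hm.le)
  have := aux_roots_card f hf
  have heval : ∀ y : K, f.eval y = y ^ m + c * y := by intro y; simp [hfdef]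
  simp only [heval] at this
  omega

set_option maxHeartbeats 2000000 in
/-- Let `a, b, c ∈ F_{q²}` with `a^q + b ∈ F_q`. Then
`∑_{u ∈ F_q*} ∑_{w ∈ F_{q²}} χ(u·w^{q+1} + u·w² + (a^q·u^q + b·u)·w + c·u)
  = η((a^q + b)² − 4Tr(c)) · q²`.
Here `q` is a power of an odd prime `p`, `K` plays the role of `F_{q²}`,
`F_q = {x : K | x^q = x}`, `Tr(x) = x^q + x`, `χ` is the canonical additive character of
`F_{q²}` (via the absolute trace `∑_{i < 2n} x^(p^i)`), and `η` is the quadratic character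
of `F_q` extended by `η(0) = 0`. -/
theorem stmt16 (p n q : ℕ) (hp : p.Prime) (hp2 : p ≠ 2) (hn : 0 < n)
    (hq : q = p ^ n)
    (K : Type) [Field K] [Fintype K] (hK : Fintype.card K = q ^ 2)
    (ζ : ℂ) (hζ : IsPrimitiveRoot ζ p)
    (χ : K → ℂ)
    (hχ : ∀ x : K, ∀ m : ℕ, (m : K) = ∑ i ∈ Finset.range (2 * n), x ^ p ^ i →
      χ x = ζ ^ m)
    (η : K → ℂ) (hη0 : η 0 = 0)
    (hη1 : ∀ x : K, x ≠ 0 → (∃ y : K, y ^ q = y ∧ y ^ 2 = x) → η x = 1)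
    (hη2 : ∀ x : K, x ≠ 0 → ¬ (∃ y : K, y ^ q = y ∧ y ^ 2 = x) → η x = -1)
    (a b c : K) (hab : (a ^ q + b) ^ q = a ^ q + b) :
    ∑ u ∈ Finset.univ.filter (fun u : K => u ^ q = u ∧ u ≠ 0),
      ∑ w : K,
        χ (u * w ^ (q + 1) + u * w ^ 2 + (a ^ q * u ^ q + b * u) * w + c * u) =
      η ((a ^ q + b) ^ 2 - 4 * (c ^ q + c)) * (q : ℂ) ^ 2 := by
  classical
  have hp1 : 1 < p := hp.one_lt
  haveI : Fact p.Prime := ⟨hp⟩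
  have hq1 : 1 < q := by rw [hq]; exact Nat.one_lt_pow hn.ne' hp1
  have hq0 : 0 < q := by omega
  -- characteristic
  haveI hcharK : CharP K p := by
    have h1 : (ringChar K) ∣ q ^ 2 := by
      rw [← hK]
      exact (CharP.cast_eq_zero_iff K (ringChar K) _).mp (FiniteField.cast_card_eq_zero K)
    have h2 : (ringChar K).Prime := CharP.char_is_prime K (ringChar K)
    have h3 : ringChar K ∣ p := by
      refine h2.dvd_of_dvd_pow (n := 2 * n) ?_
      rwa [hq, ← pow_mul, mul_comm n 2] at h1
    have : ringChar K = p := (Nat.prime_dvd_prime_iff_eq h2 hp).mp h3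
    rw [← this]; exact ringChar.charP K
  have h2K : (2 : K) ≠ 0 := by
    intro h
    exact hp2 ((Nat.prime_dvd_prime_iff_eq hp Nat.prime_two).mp
      ((CharP.cast_eq_zero_iff K p 2).mp h))
  have h4K : (4 : K) ≠ 0 := by
    have : (4 : K) = 2 * 2 := by norm_num
    rw [this]; exact mul_ne_zero h2K h2K
  -- Frobenius facts
  have frob_add : ∀ x y : K, (x + y) ^ q = x ^ q + y ^ q := by
    intro x y; rw [hq]; exact add_pow_char_pow ..
  have pow_q2 : ∀ x : K, (x ^ q) ^ q = x := by
    intro x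
    rw [← pow_mul, ← sq, ← hK]
    exact FiniteField.pow_card x
  have two_q : (2 : K) ^ q = 2 := by
    have h := frob_add 1 1
    rw [one_pow] at h
    calc (2 : K) ^ q = (1 + 1 : K) ^ q := by norm_num
      _ = 2 := by rw [h]; norm_num
  have frob_sub : ∀ x y : K, (x - y) ^ q = x ^ q - y ^ q := by
    intro x y
    have h := frob_add (x - y) y
    rw [sub_add_cancel] at h
    linear_combination -h
  have frob_div2 : ∀ x : K, (x / 2) ^ q = x ^ q / 2 := by
    intro x; rw [div_pow, two_q]
  have qodd : Odd q := by
    rw [hq]; exact (hp.odd_of_ne_two hp2).pow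
  have neg_q : ∀ x : K, (-x) ^ q = -(x ^ q) := by
    intro x; exact qodd.neg_pow x
  -- the subfield F_q as a finset, and the kernel of the trace
  set A : Finset K := univ.filter (fun x : K => x ^ q = x) with hA
  set B : Finset K := univ.filter (fun x : K => x ^ q + x = 0) with hB
  have memA : ∀ x : K, x ∈ A ↔ x ^ q = x := by intro x; simp [hA]
  have memB : ∀ x : K, x ∈ B ↔ x ^ q + x = 0 := by intro x; simp [hB]
  have cardA_le : A.card ≤ q := by
    have := aux_card_linroots (K := K) q hq1 (-1)
    have heq : A = univ.filter fun y : K => y ^ q + (-1) * y = 0 := by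
      ext y; simp [hA, sub_eq_zero]
      constructor
      · intro h; rw [h]; ring
      · intro h; linear_combination h
    rw [heq]; exact this
  have cardB_le : B.card ≤ q := by
    have := aux_card_linroots (K := K) q hq1 1
    have heq : B = univ.filter fun y : K => y ^ q + 1 * y = 0 := by
      ext y; simp [hB]
    rw [heq]; exact this
  have image_sub : (univ.image fun w : K => w ^ q + w) ⊆ A := by
    intro t ht
    obtain ⟨w, _, rfl⟩ := mem_image.mp ht
    rw [memA, frob_add, pow_q2]; ring
  have fiber_card : ∀ t ∈ (univ.image fun w : K => w ^ q + w),
      (univ.filter fun w : K => w ^ q + w = t).card = B.card := by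
    intro t ht
    obtain ⟨w₀, _, hw₀⟩ := mem_image.mp ht
    apply Finset.card_nbij' (fun w => w - w₀) (fun x => x + w₀)
    · intro w hw
      simp only [Finset.mem_coe] at hw ⊢
      rw [mem_filter] at hw
      rw [memB, frob_sub]
      linear_combination hw.2 - hw₀
    · intro x hx
      simp only [Finset.mem_coe] at hx ⊢
      rw [memB] at hx
      simp only [mem_filter, mem_univ, true_and]
      rw [frob_add]
      linear_combination hx + hw₀
    · intro w _; ring
    · intro x _; ring
  have count_eq : q ^ 2 = (univ.image fun w : K => w ^ q + w).card * B.card := by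
    rw [← hK, ← Finset.card_univ]
    rw [Finset.card_eq_sum_card_image (fun w : K => w ^ q + w) univ]
    rw [Finset.sum_congr rfl fiber_card, Finset.sum_const, smul_eq_mul]

  have himle : (univ.image fun w : K => w ^ q + w).card ≤ A.card :=
    Finset.card_le_card image_sub
  have cardB : B.card = q := by
    have h1 : q * q ≤ q * B.card := by
      calc q * q = q ^ 2 := (sq q).symm
        _ = (univ.image fun w : K => w ^ q + w).card * B.card := count_eq
        _ ≤ q * B.card := Nat.mul_le_mul_right _ (himle.trans cardA_le)
    have := Nat.le_of_mul_le_mul_left h1 hq0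
    omega
  have cardIm : (univ.image fun w : K => w ^ q + w).card = q := by
    have h1 := count_eq
    rw [cardB, sq] at h1
    have h2 : q ≤ (univ.image fun w : K => w ^ q + w).card :=
      Nat.le_of_mul_le_mul_right (le_of_eq h1) hq0
    omega
  have cardA : A.card = q := le_antisymm cardA_le (by rw [← cardIm]; exact himle)
  have imageA : (univ.image fun w : K => w ^ q + w) = A := by
    apply Finset.eq_of_subset_of_card_le image_sub
    rw [cardA, cardIm]
  -- absolute trace machinery
  set tr : K → K := fun x => ∑ i ∈ Finset.range (2 * n), x ^ p ^ i with htr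
  have pow_p2n : ∀ x : K, x ^ p ^ (2 * n) = x := by
    intro x
    have h : p ^ (2 * n) = q ^ 2 := by rw [hq, ← pow_mul, mul_comm]
    rw [h, ← hK]; exact FiniteField.pow_card x
  have tr_frob : ∀ x : K, (tr x) ^ p = tr x := by
    intro x
    have h1 : (tr x) ^ p = ∑ i ∈ Finset.range (2 * n), (x ^ p ^ i) ^ p := by
      rw [htr]
      simp only []
      exact sum_pow_char ..
    have h2 : ∀ i, (x ^ p ^ i) ^ p = x ^ p ^ (i + 1) := by
      intro i; rw [← pow_mul, ← pow_succ]
    rw [h1, Finset.sum_congr rfl fun i _ => h2 i]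
    have h3 := Finset.sum_range_succ' (fun i => x ^ p ^ i) (2 * n)
    have h4 := Finset.sum_range_succ (fun i => x ^ p ^ i) (2 * n)
    rw [h4] at h3
    have h5 : x ^ p ^ (2 * n) = x ^ p ^ 0 := by rw [pow_p2n, pow_zero, pow_one]
    rw [htr]
    simp only [] at h3 ⊢
    rw [h5] at h3
    linear_combination -h3
  have exists_m : ∀ y : K, y ^ p = y → ∃ m : ℕ, (m : K) = y := by
    intro y hy
    set T : Finset K := univ.filter (fun z : K => z ^ p = z) with hT
    have hTcard : T.card ≤ p := by
      have h := aux_card_linroots (K := K) p hp1 (-1)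
      have heq : T = univ.filter fun z : K => z ^ p + (-1) * z = 0 := by
        ext z
        simp only [hT, mem_filter, mem_univ, true_and, neg_one_mul]
        constructor
        · intro hh; rw [hh]; ring
        · intro hh; linear_combination hh
      rw [heq]; exact h
    set e : ZMod p → K := fun z => ZMod.castHom (dvd_refl p) K z with he
    have hinj : Function.Injective e := (ZMod.castHom (dvd_refl p) K).injective
    have hfix : ∀ z : ZMod p, (e z) ^ p = e z := by
      intro z
      have h1 : frobenius K p (e z) = e z := by
        rw [he]
        simp only []
        rw [ZMod.castHom_apply, ← ZMod.natCast_val]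
        exact map_natCast (frobenius K p) _
      rw [← frobenius_def]
      exact h1
    have hsub : (univ : Finset (ZMod p)).image e ⊆ T := by
      intro z hz
      obtain ⟨w, _, rfl⟩ := mem_image.mp hz
      rw [hT, mem_filter]
      exact ⟨mem_univ _, hfix w⟩
    have hcard : ((univ : Finset (ZMod p)).image e).card = p := by
      rw [Finset.card_image_of_injective _ hinj, Finset.card_univ, ZMod.card]
    have hTeq : T = (univ : Finset (ZMod p)).image e :=
      (Finset.eq_of_subset_of_card_le hsub (by rw [hcard]; exact hTcard)).symm
    have hyT : y ∈ T := by rw [hT, mem_filter]; exact ⟨mem_univ _, hy⟩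
    rw [hTeq] at hyT
    obtain ⟨z, _, hz⟩ := mem_image.mp hyT
    refine ⟨z.val, ?_⟩
    rw [← hz, he]
    simp only []
    rw [ZMod.castHom_apply, ← ZMod.natCast_val]
  have exists_tr : ∀ x : K, ∃ m : ℕ, (m : K) = tr x := fun x => exists_m _ (tr_frob x)
  have χ_eq : ∀ (x : K) (m : ℕ), (m : K) = tr x → χ x = ζ ^ m := fun x m h => hχ x m h
  have tr_add : ∀ x y : K, tr (x + y) = tr x + tr y := by
    intro x y
    rw [htr]
    simp only []
    rw [← Finset.sum_add_distrib]
    refine Finset.sum_congr rfl fun i _ => ?_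
    exact add_pow_char_pow ..
  have χ_add : ∀ x y : K, χ (x + y) = χ x * χ y := by
    intro x y
    obtain ⟨m1, hm1⟩ := exists_tr x
    obtain ⟨m2, hm2⟩ := exists_tr y
    rw [χ_eq x m1 hm1, χ_eq y m2 hm2, ← pow_add]
    exact χ_eq (x + y) (m1 + m2) (by push_cast; rw [hm1, hm2, tr_add])
  have χ_zero : χ 0 = 1 := by
    have h0 : ((0 : ℕ) : K) = tr 0 := by
      rw [htr]
      simp only []
      rw [Finset.sum_congr rfl fun i _ => zero_pow (pow_pos hp.pos i).ne']
      simp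
    rw [χ_eq 0 0 h0, pow_zero]
  have tr_fold : ∀ x : K, tr x = ∑ i ∈ Finset.range n, (x + x ^ q) ^ p ^ i := by
    intro x
    rw [htr]
    simp only []
    rw [two_mul, Finset.sum_range_add, ← Finset.sum_add_distrib]
    refine Finset.sum_congr rfl fun i _ => ?_
    have h : x ^ p ^ (n + i) = (x ^ q) ^ p ^ i := by rw [← pow_mul, hq, ← pow_add]
    rw [h]
    exact (add_pow_char_pow ..).symm
  have χ_tr_inv : ∀ x y : K, x + x ^ q = y + y ^ q → χ x = χ y := by
    intro x y h
    obtain ⟨m, hm⟩ := exists_tr x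
    have hm' : (m : K) = tr y := by rw [hm, tr_fold x, tr_fold y, h]
    rw [χ_eq x m hm, χ_eq y m hm']
  set ψ : K → ℂ := fun y => χ (y / 2) with hψdef
  have ψ_of : ∀ x : K, χ x = ψ (x + x ^ q) := by
    intro x
    apply χ_tr_inv
    rw [frob_div2, frob_add, pow_q2]
    field_simp
    ring
  have ψ_add : ∀ y z : K, ψ (y + z) = ψ y * ψ z := by
    intro y z
    rw [hψdef]
    simp only []
    rw [add_div, χ_add]
  have ψ_zero : ψ 0 = 1 := by rw [hψdef]; simp only []; rw [zero_div, χ_zero]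
  -- nontriviality
  have exists_x : ∃ x : K, tr x ≠ 0 := by
    by_contra hcon
    push_neg at hcon
    set g : Polynomial K := ∑ i ∈ Finset.range (2 * n), X ^ p ^ i with hg
    have hcoeff : g.coeff 1 = 1 := by
      rw [hg, Polynomial.finset_sum_coeff]
      rw [Finset.sum_eq_single 0]
      · simp
      · intro i _ hi0
        rw [Polynomial.coeff_X_pow, if_neg]
        have : 1 < p ^ i := Nat.one_lt_pow hi0 hp1
        omega
      · intro hh
        exact absurd (Finset.mem_range.mpr (by omega)) hh
    have hg0 : g ≠ 0 := fun hh => by simp [hh] at hcoeff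
    have hdeg : g.natDegree ≤ p ^ (2 * n - 1) := by
      rw [hg]
      apply Polynomial.natDegree_sum_le_of_forall_le
      intro i hi
      rw [Polynomial.natDegree_X_pow]
      exact Nat.pow_le_pow_right hp.pos (by have := Finset.mem_range.mp hi; omega)
    have hroots := aux_roots_card g hg0
    have hall : (univ : Finset K) ⊆ univ.filter (fun y : K => g.eval y = 0) := by
      intro y _
      rw [mem_filter]
      refine ⟨mem_univ _, ?_⟩
      have heval : g.eval y = tr y := by
        rw [hg, htr]
        simp [Polynomial.eval_finset_sum]
      rw [heval, hcon y]
    have hcard : Fintype.card K ≤ p ^ (2 * n - 1) := by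
      calc Fintype.card K = (univ : Finset K).card := Finset.card_univ.symm
        _ ≤ (univ.filter (fun y : K => g.eval y = 0)).card := Finset.card_le_card hall
        _ ≤ g.natDegree := hroots
        _ ≤ p ^ (2 * n - 1) := hdeg
    have hlt : p ^ (2 * n - 1) < p ^ (2 * n) :=
      Nat.pow_lt_pow_right hp1 (by omega)
    have hKq : Fintype.card K = p ^ (2 * n) := by
      rw [hK, hq, ← pow_mul, mul_comm]
    omega
  have exists_y0 : ∃ y₀ : K, y₀ ^ q = y₀ ∧ ψ y₀ ≠ 1 := by
    obtain ⟨x, hx⟩ := exists_x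
    refine ⟨x + x ^ q, by rw [frob_add, pow_q2]; ring, ?_⟩
    rw [← ψ_of]
    obtain ⟨m, hm⟩ := exists_tr x
    rw [χ_eq x m hm]
    intro hone
    rw [hζ.pow_eq_one_iff_dvd] at hone
    exact hx (by rw [← hm, (CharP.cast_eq_zero_iff K p m).mpr hone])
  have sum_psi : ∑ y ∈ A, ψ y = 0 := by
    obtain ⟨y₀, hy₀q, hy₀⟩ := exists_y0
    have key : ∑ y ∈ A, ψ y = ∑ y ∈ A, ψ (y + y₀) := by
      apply Finset.sum_nbij' (i := fun y => y - y₀) (j := fun y => y + y₀)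
      · intro y hy
        rw [memA] at hy ⊢
        rw [frob_sub, hy, hy₀q]
      · intro y hy
        rw [memA] at hy ⊢
        rw [frob_add, hy, hy₀q]
      · intro y _; ring
      · intro y _; ring
      · intro y _
        rw [sub_add_cancel]
    have key2 : ∑ y ∈ A, ψ (y + y₀) = ψ y₀ * ∑ y ∈ A, ψ y := by
      rw [Finset.mul_sum]
      exact Finset.sum_congr rfl fun y _ => by rw [ψ_add]; ring
    have h3 : (ψ y₀ - 1) * ∑ y ∈ A, ψ y = 0 := by
      rw [key2] at key
      linear_combination -key
    rcases mul_eq_zero.mp h3 with h | h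
    · exact absurd (by linear_combination h) hy₀
    · exact h
  have orth : ∀ v : K, v ^ q = v → ∑ u ∈ A, ψ (u * v) = if v = 0 then (q : ℂ) else 0 := by
    intro v hv
    by_cases hv0 : v = 0
    · rw [if_pos hv0, hv0]
      simp only [mul_zero, ψ_zero]
      rw [Finset.sum_const, cardA]
      simp
    · rw [if_neg hv0, ← sum_psi]
      apply Finset.sum_nbij' (i := fun u => u * v) (j := fun y => y * v⁻¹)
      · intro u hu
        rw [memA] at hu ⊢
        rw [mul_pow, hu, hv]
      · intro y hy
        rw [memA] at hy ⊢
        rw [mul_pow, hy, inv_pow, hv]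
      · intro u _
        field_simp
      · intro y _
        field_simp
      · intro u _; rfl
  -- main computation
  set s := a ^ q + b with hs
  set T := c ^ q + c with hT2
  set D := s ^ 2 - 4 * T with hD
  have hsq2 : s ^ q = s := hab
  have four_q : (4 : K) ^ q = 4 := by
    have h : (4 : K) = 2 * 2 := by norm_num
    rw [h, mul_pow, two_q]
  have hTq : T ^ q = T := by rw [hT2, frob_add, pow_q2]; ring
  have hDq : D ^ q = D := by
    rw [hD, frob_sub, mul_pow, pow_right_comm, hsq2, four_q, hTq]
  have inner_psi : ∀ u : K, u ^ q = u → ∀ w : K,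
      χ (u * w ^ (q + 1) + u * w ^ 2 + (a ^ q * u ^ q + b * u) * w + c * u)
      = ψ (u * ((w ^ q + w) ^ 2 + s * (w ^ q + w) + T)) := by
    intro u hu w
    rw [ψ_of]
    congr 1
    have e1 : u * w ^ (q + 1) + u * w ^ 2 + (a ^ q * u ^ q + b * u) * w + c * u
        = u * (w ^ q * w) + u * w ^ 2 + s * u * w + c * u := by
      rw [pow_succ, hu, hs]; ring
    rw [e1]
    have f1 : (u * (w ^ q * w)) ^ q = u * (w * w ^ q) := by
      rw [mul_pow, mul_pow, pow_q2, hu]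
    have f2 : (u * w ^ 2) ^ q = u * (w ^ q) ^ 2 := by
      rw [mul_pow, pow_right_comm, hu]
    have f3 : (s * u * w) ^ q = s * u * w ^ q := by
      rw [mul_pow, mul_pow, hu, hsq2]
    have f4 : (c * u) ^ q = c ^ q * u := by rw [mul_pow, hu]
    rw [frob_add, frob_add, frob_add, f1, f2, f3, f4, hT2]
    ring
  have group_sum : ∀ G : K → ℂ, ∑ w : K, G (w ^ q + w) = (q : ℂ) * ∑ t ∈ A, G t := by
    intro G
    have h1 : ∀ t ∈ A, ∑ w ∈ univ.filter (fun w : K => w ^ q + w = t), G (w ^ q + w)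
        = (q : ℂ) * G t := by
      intro t ht
      have h2 : ∀ w ∈ univ.filter (fun w : K => w ^ q + w = t), G (w ^ q + w) = G t := by
        intro w hw
        rw [(Finset.mem_filter.mp hw).2]
      rw [Finset.sum_congr rfl h2, Finset.sum_const,
        fiber_card t (by rw [imageA]; exact ht), cardB, nsmul_eq_mul]
    calc ∑ w : K, G (w ^ q + w)
        = ∑ t ∈ A, ∑ w ∈ univ.filter (fun w : K => w ^ q + w = t), G (w ^ q + w) :=
          (Finset.sum_fiberwise_of_maps_to
            (fun w _ => image_sub (Finset.mem_image_of_mem _ (mem_univ w))) _).symm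
      _ = ∑ t ∈ A, (q : ℂ) * G t := Finset.sum_congr rfl h1
      _ = (q : ℂ) * ∑ t ∈ A, G t := (Finset.mul_sum _ _ _).symm
  have sumw : ∀ u : K, u ^ q = u →
      ∑ w : K, χ (u * w ^ (q + 1) + u * w ^ 2 + (a ^ q * u ^ q + b * u) * w + c * u)
      = (q : ℂ) * ∑ t ∈ A, ψ (u * (t ^ 2 + s * t + T)) := by
    intro u hu
    rw [Finset.sum_congr rfl fun w _ => inner_psi u hu w]
    exact group_sum (fun t => ψ (u * (t ^ 2 + s * t + T)))
  have hA' : (univ.filter fun u : K => u ^ q = u ∧ u ≠ 0) = A.erase 0 := by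
    ext x
    simp only [mem_filter, mem_univ, true_and, Finset.mem_erase, hA]
    tauto
  have zeroA : (0 : K) ∈ A := by rw [memA]; exact zero_pow (by omega)
  have sumu : ∀ v : K, v ^ q = v →
      ∑ u ∈ A.erase 0, ψ (u * v) = (if v = 0 then (q : ℂ) else 0) - 1 := by
    intro v hv
    rw [Finset.sum_erase_eq_sub zeroA, orth v hv, zero_mul, ψ_zero]
  have hft : ∀ t ∈ A, (t ^ 2 + s * t + T) ^ q = t ^ 2 + s * t + T := by
    intro t ht
    rw [memA] at ht
    rw [frob_add, frob_add, pow_right_comm, mul_pow, hsq2, hTq, ht]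
  set N : ℕ := (A.filter fun t => t ^ 2 + s * t + T = 0).card with hN
  have main : ∑ u ∈ A.erase 0,
      ∑ w : K, χ (u * w ^ (q + 1) + u * w ^ 2 + (a ^ q * u ^ q + b * u) * w + c * u)
      = (q : ℂ) ^ 2 * ((N : ℂ) - 1) := by
    calc ∑ u ∈ A.erase 0,
        ∑ w : K, χ (u * w ^ (q + 1) + u * w ^ 2 + (a ^ q * u ^ q + b * u) * w + c * u)
        = ∑ u ∈ A.erase 0, (q : ℂ) * ∑ t ∈ A, ψ (u * (t ^ 2 + s * t + T)) := by
          refine Finset.sum_congr rfl fun u hu => ?_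
          exact sumw u ((memA u).mp (Finset.mem_of_mem_erase hu))
      _ = (q : ℂ) * ∑ t ∈ A, ∑ u ∈ A.erase 0, ψ (u * (t ^ 2 + s * t + T)) := by
          rw [← Finset.mul_sum, Finset.sum_comm]
      _ = (q : ℂ) * ∑ t ∈ A, ((if t ^ 2 + s * t + T = 0 then (q : ℂ) else 0) - 1) := by
          rw [Finset.sum_congr rfl fun t ht => sumu _ (hft t ht)]
      _ = (q : ℂ) * ((q : ℂ) * (N : ℂ) - (q : ℂ)) := by
          rw [Finset.sum_sub_distrib, Finset.sum_const, ← Finset.sum_filter, Finset.sum_const]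
          rw [cardA, hN]
          simp [mul_comm]
      _ = (q : ℂ) ^ 2 * ((N : ℂ) - 1) := by ring
  have hNM : N = (A.filter fun y => y ^ 2 = D).card := by
    rw [hN]
    apply Finset.card_nbij' (fun t => 2 * t + s) (fun y => (y - s) / 2)
    · intro t ht
      simp only [Finset.mem_coe] at ht ⊢
      rw [mem_filter] at ht ⊢
      obtain ⟨htA, hft0⟩ := ht
      rw [memA] at htA
      refine ⟨?_, ?_⟩
      · rw [memA, frob_add, mul_pow, two_q, htA, hsq2]
      · rw [hD]; linear_combination 4 * hft0
    · intro y hy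
      simp only [Finset.mem_coe] at hy ⊢
      rw [mem_filter] at hy ⊢
      obtain ⟨hyA, hy2⟩ := hy
      rw [memA] at hyA
      refine ⟨?_, ?_⟩
      · rw [memA, frob_div2, frob_sub, hyA, hsq2]
      · rw [hD] at hy2
        have ht2 : ((y - s) / 2) * 2 = y - s := div_mul_cancel₀ _ h2K
        have h4G : (4 : K) * (((y - s) / 2) ^ 2 + s * ((y - s) / 2) + T) = 0 := by
          linear_combination (2 * ((y - s) / 2) + s + y) * ht2 + hy2
        rcases mul_eq_zero.mp h4G with h | h
        · exact absurd h h4K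
        · exact h
    · intro t _
      field_simp
      ring
    · intro y _
      field_simp
      ring
  have goal_eq : ∑ u ∈ univ.filter (fun u : K => u ^ q = u ∧ u ≠ 0),
      ∑ w : K, χ (u * w ^ (q + 1) + u * w ^ 2 + (a ^ q * u ^ q + b * u) * w + c * u)
      = (q : ℂ) ^ 2 * ((N : ℂ) - 1) := by
    rw [← main]
    exact Finset.sum_congr hA' fun u _ => rfl
  rw [goal_eq]
  -- final case analysis
  by_cases hD0 : D = 0
  · have hfe : (A.filter fun y => y ^ 2 = D) = {0} := by
      ext y
      simp only [mem_filter, Finset.mem_singleton, hD0]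
      constructor
      · rintro ⟨_, hy2⟩
        exact pow_eq_zero_iff (by omega) |>.mp hy2
      · rintro rfl
        exact ⟨zeroA, by rw [zero_pow (by omega : (2:ℕ) ≠ 0)]⟩
    rw [hD0, hη0, hNM, hfe]
    simp
  · by_cases hsqr : ∃ y : K, y ^ q = y ∧ y ^ 2 = D
    · obtain ⟨y, hyq, hy2⟩ := hsqr
      have hy0 : y ≠ 0 := by
        rintro rfl
        exact hD0 (by rw [← hy2, zero_pow (by omega : (2:ℕ) ≠ 0)])
      have hyny : y ≠ -y := by
        intro h
        apply hy0
        have h2 : 2 * y = 0 := by linear_combination h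
        rcases mul_eq_zero.mp h2 with h | h
        · exact absurd h h2K
        · exact h
      have hfe : (A.filter fun z => z ^ 2 = D) = {y, -y} := by
        ext z
        simp only [mem_filter, Finset.mem_insert, Finset.mem_singleton]
        constructor
        · rintro ⟨hzA, hz2⟩
          have hzz : (z - y) * (z + y) = 0 := by linear_combination hz2 - hy2
          rcases mul_eq_zero.mp hzz with h | h
          · left; linear_combination h
          · right; linear_combination h
        · rintro (h | h)
          · rw [h]
            exact ⟨(memA y).mpr hyq, hy2⟩
          · rw [h]
            exact ⟨(memA (-y)).mpr (by rw [neg_q, hyq]), by linear_combination hy2⟩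
      have hcard2 : ({y, -y} : Finset K).card = 2 := by
        rw [Finset.card_insert_of_notMem (by simpa using hyny), Finset.card_singleton]
      rw [hη1 D hD0 ⟨y, hyq, hy2⟩, hNM, hfe, hcard2]
      norm_num
    · have hfe : (A.filter fun z => z ^ 2 = D) = ∅ := by
        ext z
        simp only [mem_filter, Finset.notMem_empty, iff_false, not_and]
        intro hzA hz2
        exact hsqr ⟨z, (memA z).mp hzA, hz2⟩
      rw [hη2 D hD0 hsqr, hNM, hfe]
      simp
end

section
/- Let a, b, c ∈ F_{q²} with a^q + b ∉ F_q. Then Σ_{u ∈ F_q, u ≠ 0} Σ_{w ∈ F_{q²}} χ(u·w^{q+1} + u·w² + (a^q·u^q + b·u)·w + c·u) = 0. -/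
open Finset
open scoped Classical

section Aux
open Polynomial

variable {K : Type} [Field K]

/-- The absolute-trace-like sum. -/
def auxT (p N : ℕ) (x : K) : K := ∑ i ∈ Finset.range N, x ^ p ^ i

variable {p N : ℕ}

lemma auxT_add [Fact p.Prime] [CharP K p] (x y : K) :
    auxT p N (x + y) = auxT p N x + auxT p N y := by
  simp only [auxT, add_pow_char_pow, Finset.sum_add_distrib]

lemma auxT_neg (hodd : Odd p) (x : K) : auxT p N (-x) = -auxT p N x := by
  simp only [auxT, Odd.neg_pow (hodd.pow), ← Finset.sum_neg_distrib]

lemma auxT_sub [Fact p.Prime] [CharP K p] (hodd : Odd p) (x y : K) :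
    auxT p N (x - y) = auxT p N x - auxT p N y := by
  rw [sub_eq_add_neg, auxT_add, auxT_neg hodd, sub_eq_add_neg]

lemma auxT_frob [Fintype K] (hcard : Fintype.card K = p ^ N) (x : K) :
    auxT p N (x ^ p) = auxT p N x := by
  have h2 : auxT p N (x ^ p) = ∑ i ∈ Finset.range N, x ^ p ^ (i + 1) :=
    Finset.sum_congr rfl fun i _ => by rw [← pow_mul, pow_succ']
  have h3 : x ^ p ^ N = x := by
    rw [← hcard]; exact FiniteField.pow_card x
  have h4 := Finset.sum_range_succ' (fun i => x ^ p ^ i) N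
  have h5 := Finset.sum_range_succ (fun i => x ^ p ^ i) N
  have key : ∑ i ∈ Finset.range N, x ^ p ^ (i + 1) + x ^ p ^ 0
      = ∑ i ∈ Finset.range N, x ^ p ^ i + x ^ p ^ N := by
    rw [← h4, h5]
  rw [h3, pow_zero, pow_one] at key
  have := add_right_cancel key
  rw [h2, this]; rfl

lemma auxT_frob_pow [Fintype K] (hcard : Fintype.card K = p ^ N) (k : ℕ) (x : K) :
    auxT p N (x ^ p ^ k) = auxT p N x := by
  induction k with
  | zero => simp
  | succ k ih =>
    rw [pow_succ, pow_mul, auxT_frob hcard, ih]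

lemma auxT_ker (hodd : Odd p) {n : ℕ} {y : K} (hy : y ^ p ^ n = -y) :
    auxT p (2 * n) y = 0 := by
  unfold auxT
  rw [two_mul, Finset.sum_range_add]
  have h1 : ∀ i : ℕ, y ^ p ^ (n + i) = -(y ^ p ^ i) := by
    intro i
    rw [pow_add, pow_mul, hy, Odd.neg_pow hodd.pow]
  rw [Finset.sum_congr rfl (fun i _ => h1 i)]
  simp

lemma auxT_pow_p (hp : p.Prime) [CharP K p] {t : K} (ht : t ^ p = t) :
    ∃ m : ℕ, (m : K) = t := by
  haveI : Fact p.Prime := ⟨hp⟩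
  classical
  set P : K[X] := X ^ p - X with hP
  have hdX : (X : K[X]).natDegree < (X ^ p : K[X]).natDegree := by
    rw [natDegree_X_pow, natDegree_X]; exact hp.one_lt
  have hPd : P.natDegree = p := by
    rw [hP, natDegree_sub_eq_left_of_natDegree_lt hdX, natDegree_X_pow]
  have hP0 : P ≠ 0 := by
    intro h
    rw [h, natDegree_zero] at hPd
    exact hp.ne_zero hPd.symm
  set S : Finset K := (Finset.range p).image (Nat.cast : ℕ → K) with hS
  have hScard : S.card = p := by
    rw [hS, Finset.card_image_of_injOn, Finset.card_range]
    intro a ha b hb hab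
    exact CharP.natCast_injOn_Iio K p (by simpa using ha) (by simpa using hb) hab
  have hroot : ∀ m : ℕ, ((m : K)) ^ p = (m : K) := by
    intro m
    have : ((m : ZMod p)) ^ p = (m : ZMod p) := ZMod.pow_card _
    have h2 : ((m ^ p : ℕ) : ZMod p) = (m : ZMod p) := by push_cast [this]; rfl
    have h3 : m ^ p ≡ m [MOD p] := (ZMod.natCast_eq_natCast_iff _ _ _).mp h2
    calc ((m : K)) ^ p = ((m ^ p : ℕ) : K) := by push_cast; ring
      _ = (m : K) := CharP.natCast_eq_natCast' K p h3
  have hSsub : S ⊆ P.roots.toFinset := by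
    intro z hz
    rw [hS, Finset.mem_image] at hz
    obtain ⟨m, _, rfl⟩ := hz
    rw [Multiset.mem_toFinset, Polynomial.mem_roots hP0]
    simp [P, Polynomial.IsRoot, hroot m, sub_eq_zero]
  have hRcard : P.roots.toFinset.card ≤ p := by
    calc P.roots.toFinset.card ≤ Multiset.card P.roots := Multiset.toFinset_card_le _
      _ ≤ P.natDegree := Polynomial.card_roots' P
      _ = p := hPd
  have hSeq : S = P.roots.toFinset :=
    Finset.eq_of_subset_of_card_le hSsub (by rw [hScard]; exact hRcard)
  have htmem : t ∈ P.roots.toFinset := by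
    rw [Multiset.mem_toFinset, Polynomial.mem_roots hP0]
    simp [P, Polynomial.IsRoot, ht, sub_eq_zero]
  rw [← hSeq, hS, Finset.mem_image] at htmem
  obtain ⟨m, _, hm⟩ := htmem
  exact ⟨m, hm⟩

lemma auxT_exists_nat [Fintype K] (hp : p.Prime) [CharP K p]
    (hcard : Fintype.card K = p ^ N) (x : K) :
    ∃ m : ℕ, (m : K) = auxT p N x := by
  haveI : Fact p.Prime := ⟨hp⟩
  apply auxT_pow_p hp
  have : (auxT p N x) ^ p = auxT p N (x ^ p) := by
    unfold auxT
    rw [sum_pow_char]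
    exact Finset.sum_congr rfl fun i _ => by rw [← pow_mul, ← pow_mul, mul_comm]
  rw [this, auxT_frob hcard]

lemma auxT_exists_ne [Fintype K] (hp : p.Prime) (hN : 0 < N)
    (hcard : Fintype.card K = p ^ N) :
    ∃ y : K, auxT p N y ≠ 0 := by
  by_contra h
  push_neg at h
  classical
  set Q : K[X] := ∑ i ∈ Finset.range N, X ^ p ^ i with hQ
  have hQc : Q.coeff 1 = 1 := by
    rw [hQ, Polynomial.finset_sum_coeff]
    rw [Finset.sum_eq_single 0]
    · simp
    · intro i hi hi0
      rw [Polynomial.coeff_X_pow]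
      have h1 : 1 < p ^ i := Nat.one_lt_pow hi0 hp.one_lt
      simp [Nat.ne_of_lt h1]
    · intro h0
      exact absurd (Finset.mem_range.mpr hN) h0
  have hQ0 : Q ≠ 0 := fun h0 => by simp [h0] at hQc
  have hQd : Q.natDegree ≤ p ^ (N - 1) := by
    apply Polynomial.natDegree_sum_le_of_forall_le
    intro i hi
    rw [Polynomial.natDegree_X_pow]
    rw [Finset.mem_range] at hi
    exact Nat.pow_le_pow_right hp.pos (by omega)
  have hallroots : ∀ x : K, Q.IsRoot x := by
    intro x
    have := h x
    unfold auxT at this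
    simp only [Polynomial.IsRoot, hQ, Polynomial.eval_finset_sum,
      Polynomial.eval_pow, Polynomial.eval_X]
    exact this
  have hsub : (Finset.univ : Finset K) ⊆ Q.roots.toFinset := by
    intro x _
    exact Multiset.mem_toFinset.mpr ((Polynomial.mem_roots hQ0).mpr (hallroots x))
  have hchain : p ^ N ≤ p ^ (N - 1) := by
    calc p ^ N = Fintype.card K := hcard.symm
      _ = (Finset.univ : Finset K).card := Finset.card_univ.symm
      _ ≤ Q.roots.toFinset.card := Finset.card_le_card hsub
      _ ≤ Multiset.card Q.roots := Multiset.toFinset_card_le _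
      _ ≤ Q.natDegree := Polynomial.card_roots' Q
      _ ≤ p ^ (N - 1) := hQd
  have hlt : p ^ (N - 1) < p ^ N := Nat.pow_lt_pow_right hp.one_lt (by omega)
  omega

end Aux

/-- Let `a, b, c ∈ F_{q²}` with `a^q + b ∉ F_q`. Then
`∑_{u ∈ F_q*} ∑_{w ∈ F_{q²}} χ(u·w^{q+1} + u·w² + (a^q·u^q + b·u)·w + c·u) = 0`.
Here `q` is a power of an odd prime `p`, `K` plays the role of `F_{q²}`,
`F_q = {x : K | x^q = x}`, and `χ` is the canonical additive character of `F_{q²}`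
(via the absolute trace `∑_{i < 2n} x^(p^i)`). -/
theorem stmt17 (p n q : ℕ) (hp : p.Prime) (hp2 : p ≠ 2) (hn : 0 < n)
    (hq : q = p ^ n)
    (K : Type) [Field K] [Fintype K] (hK : Fintype.card K = q ^ 2)
    (ζ : ℂ) (hζ : IsPrimitiveRoot ζ p)
    (χ : K → ℂ)
    (hχ : ∀ x : K, ∀ m : ℕ, (m : K) = ∑ i ∈ Finset.range (2 * n), x ^ p ^ i →
      χ x = ζ ^ m)
    (a b c : K) (hab : (a ^ q + b) ^ q ≠ a ^ q + b) :
    ∑ u ∈ Finset.univ.filter (fun u : K => u ^ q = u ∧ u ≠ 0),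
      ∑ w : K,
        χ (u * w ^ (q + 1) + u * w ^ 2 + (a ^ q * u ^ q + b * u) * w + c * u) = 0 := by
  haveI : Fact p.Prime := ⟨hp⟩
  have hodd : Odd p := hp.odd_of_ne_two hp2
  have hcard : Fintype.card K = p ^ (2 * n) := by
    rw [hK, hq, ← pow_mul, mul_comm]
  have hpK : (p : K) = 0 := by
    have h0 : ((Fintype.card K : ℕ) : K) = 0 := Nat.cast_card_eq_zero K
    rw [hcard] at h0
    push_cast at h0
    exact (pow_eq_zero_iff (by omega : 2 * n ≠ 0)).mp h0
  haveI : CharP K p := (CharP.charP_iff_prime_eq_zero hp).mpr hpK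
  have hq0 : q ≠ 0 := by rw [hq]; exact pow_ne_zero n hp.ne_zero
  -- basic Frobenius facts
  have hqq : ∀ x : K, (x ^ q) ^ q = x := by
    intro x
    rw [← pow_mul, ← pow_two, ← hK]
    exact FiniteField.pow_card x
  have haddq : ∀ x y : K, (x + y) ^ q = x ^ q + y ^ q := by
    intro x y; rw [hq]; exact add_pow_char_pow ..
  have hsubq : ∀ x y : K, (x - y) ^ q = x ^ q - y ^ q := by
    intro x y; rw [hq]; exact sub_pow_char_pow ..
  -- character facts
  have hχval : ∀ x : K, ∃ m : ℕ, (m : K) = auxT p (2 * n) x ∧ χ x = ζ ^ m := by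
    intro x
    obtain ⟨m, hm⟩ := auxT_exists_nat hp hcard x
    exact ⟨m, hm, hχ x m hm⟩
  have hχcongr : ∀ x y : K, auxT p (2 * n) x = auxT p (2 * n) y → χ x = χ y := by
    intro x y h
    obtain ⟨m, hm, hxv⟩ := hχval x
    rw [hxv, hχ y m (by rw [h] at hm; exact hm)]
  have hχadd : ∀ x y : K, χ (x + y) = χ x * χ y := by
    intro x y
    obtain ⟨mx, hmx, hxv⟩ := hχval x
    obtain ⟨my, hmy, hyv⟩ := hχval y
    have hsum : ((mx + my : ℕ) : K) = auxT p (2 * n) (x + y) := by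
      rw [auxT_add]; push_cast; rw [hmx, hmy]
    rw [hxv, hyv, hχ (x + y) (mx + my) hsum, pow_add]
  have hχsum : (∑ x : K, χ x) = 0 := by
    obtain ⟨y, hy⟩ := auxT_exists_ne hp (by omega) hcard
    obtain ⟨m, hm, hyv⟩ := hχval y
    have hζm : ζ ^ m ≠ 1 := by
      intro h1
      have hdvd : p ∣ m := hζ.dvd_of_pow_eq_one m h1
      have : (m : K) = 0 := (CharP.cast_eq_zero_iff K p m).mpr hdvd
      rw [hm] at this
      exact hy this
    have h1 : ∑ x : K, χ (x + y) = ∑ x : K, χ x :=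
      Fintype.sum_equiv (Equiv.addRight y) _ _ (fun x => rfl)
    have h2 : ∑ x : K, χ (x + y) = (∑ x : K, χ x) * χ y := by
      rw [Finset.sum_mul]
      exact Finset.sum_congr rfl fun x _ => hχadd x y
    have h3 : (∑ x : K, χ x) * (χ y - 1) = 0 := by
      rw [mul_sub, mul_one, ← h2, h1, sub_self]
    rcases mul_eq_zero.mp h3 with h | h
    · exact h
    · exact absurd (by rwa [hyv] at h : ζ ^ m - 1 = 0) (sub_ne_zero.mpr hζm)
  have hχmulsum : ∀ e : K, e ≠ 0 → ∑ x : K, χ (e * x) = 0 := by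
    intro e he
    rw [Fintype.sum_equiv (Equiv.mulLeft₀ e he) (fun x => χ (e * x)) χ (fun x => rfl)]
    exact hχsum
  -- main computation
  apply Finset.sum_eq_zero
  intro u hu
  rw [Finset.mem_filter] at hu
  obtain ⟨-, hu1, hu2⟩ := hu
  set d : K := a ^ q * u ^ q + b * u with hd
  set S : ℂ := ∑ w : K, χ (u * w ^ (q + 1) + u * w ^ 2 + d * w + c * u) with hS
  have hdq : d ^ q - d ≠ 0 := by
    have h1 : d = (a ^ q + b) * u := by rw [hd, hu1]; ring
    have h2 : d ^ q = (a ^ q + b) ^ q * u := by rw [h1, mul_pow, hu1]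
    rw [h2, h1, ← sub_mul]
    exact mul_ne_zero (sub_ne_zero.mpr hab) hu2
  have hker : ∀ s : K, s ^ q = -s → ∀ w : K,
      χ (u * (w + s) ^ (q + 1) + u * (w + s) ^ 2 + d * (w + s) + c * u)
        = χ (u * w ^ (q + 1) + u * w ^ 2 + d * w + c * u) * χ (d * s) := by
    intro s hs w
    have hws : (w + s) ^ q = w ^ q - s := by rw [haddq, hs]; ring
    have hexpand : u * (w + s) ^ (q + 1) + u * (w + s) ^ 2 + d * (w + s) + c * u
        = (u * w ^ (q + 1) + u * w ^ 2 + d * w + c * u)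
          + (u * s * (w ^ q + w) + d * s) := by
      rw [pow_succ, pow_succ, hws]
      ring
    have hkerTr : auxT p (2 * n) (u * s * (w ^ q + w)) = 0 := by
      apply auxT_ker hodd
      rw [← hq, mul_pow, mul_pow, haddq, hu1, hs, hqq w]
      ring
    have hχker : χ (u * s * (w ^ q + w)) = 1 := by
      have h0 : ((0 : ℕ) : K) = auxT p (2 * n) (u * s * (w ^ q + w)) := by
        rw [hkerTr]; simp
      rw [hχ _ 0 h0, pow_zero]
    rw [hexpand, hχadd _ (u * s * (w ^ q + w) + d * s),
      hχadd (u * s * (w ^ q + w)) (d * s), hχker, one_mul]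
  have hstep : ∀ x : K, S = S * χ (d * (x ^ q - x)) := by
    intro x
    have hs : (x ^ q - x) ^ q = -(x ^ q - x) := by
      rw [hsubq, hqq]; ring
    have h1 : ∑ w : K,
        χ (u * (w + (x ^ q - x)) ^ (q + 1) + u * (w + (x ^ q - x)) ^ 2
          + d * (w + (x ^ q - x)) + c * u) = S :=
      Fintype.sum_equiv (Equiv.addRight (x ^ q - x)) _ _ (fun w => rfl)
    have h2 : ∑ w : K,
        χ (u * (w + (x ^ q - x)) ^ (q + 1) + u * (w + (x ^ q - x)) ^ 2
          + d * (w + (x ^ q - x)) + c * u) = S * χ (d * (x ^ q - x)) := by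
      rw [hS, Finset.sum_mul]
      exact Finset.sum_congr rfl fun w _ => hker (x ^ q - x) hs w
    exact h1.symm.trans h2
  have hTrEq : ∀ x : K, χ (d * (x ^ q - x)) = χ ((d ^ q - d) * x) := by
    intro x
    apply hχcongr
    have e1 : d * (x ^ q - x) = d * x ^ q - d * x := by ring
    have e2 : (d ^ q - d) * x = d ^ q * x - d * x := by ring
    rw [e1, e2, auxT_sub hodd, auxT_sub hodd]
    congr 1
    have h3 : auxT p (2 * n) ((d * x ^ q) ^ q) = auxT p (2 * n) (d * x ^ q) := by
      rw [hq]; exact auxT_frob_pow hcard n _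
    rw [← h3, mul_pow, hqq]
  have hsum : (Fintype.card K : ℂ) * S = S * ∑ x : K, χ (d * (x ^ q - x)) := by
    calc (Fintype.card K : ℂ) * S = ∑ _x : K, S := by
          rw [Finset.sum_const, Finset.card_univ, nsmul_eq_mul]
      _ = ∑ x : K, S * χ (d * (x ^ q - x)) := Finset.sum_congr rfl fun x _ => hstep x
      _ = S * ∑ x : K, χ (d * (x ^ q - x)) := by rw [Finset.mul_sum]
  rw [Finset.sum_congr rfl (fun x _ => hTrEq x), hχmulsum _ hdq, mul_zero] at hsum
  have hcard0 : (Fintype.card K : ℂ) ≠ 0 := by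
    rw [hK]
    exact_mod_cast pow_ne_zero 2 (by exact_mod_cast hq0 : (q:ℂ) ≠ 0)
  exact (mul_eq_zero.mp hsum).resolve_left hcard0
end
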